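/- arXiv:2411.04856 — 12 statements merged into one kernel-verified Lean document; each statement's English description precedes it below -/
import Mathlib

section
/- Let V be a finite-dimensional real vector space, let g and h be nondegenerate symmetric bilinear forms on V, let ω be a nondegenerate alternating bilinear form on V, and let A, B, J be linear endomorphisms of V satisfying g(AX,Y) = ω(X,Y), g(BX,Y) = h(X,Y) and ω(JX,Y) = −h(X,Y) for all X, Y ∈ V, together with A² = B² = Id and J² = −Id. Then the operators pairwise anti-commute, i.e. A∘B = −B∘A, A∘J = −J∘A, B∘J = −J∘B, and moreover A∘B∘J = Id. -/
/-- The recursion operators of a Born structure pairwise anti-commute and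
satisfy `A ∘ B ∘ J = Id`. -/
theorem born_recursion_operators_anticommute
    (V : Type*) [AddCommGroup V] [Module ℝ V] [FiniteDimensional ℝ V]
    (g h ω : V →ₗ[ℝ] V →ₗ[ℝ] ℝ) (A B J : V →ₗ[ℝ] V)
    (hg_symm : ∀ X Y, g X Y = g Y X)
    (hg_nondeg : ∀ X, (∀ Y, g X Y = 0) → X = 0)
    (hh_symm : ∀ X Y, h X Y = h Y X)
    (hh_nondeg : ∀ X, (∀ Y, h X Y = 0) → X = 0)
    (hω_alt : ∀ X, ω X X = 0)
    (hω_nondeg : ∀ X, (∀ Y, ω X Y = 0) → X = 0)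
    (hA : ∀ X Y, g (A X) Y = ω X Y)
    (hB : ∀ X Y, g (B X) Y = h X Y)
    (hJ : ∀ X Y, ω (J X) Y = - h X Y)
    (hA2 : ∀ X, A (A X) = X)
    (hB2 : ∀ X, B (B X) = X)
    (hJ2 : ∀ X, J (J X) = -X) :
    (∀ X, A (B X) = - B (A X)) ∧
    (∀ X, A (J X) = - J (A X)) ∧
    (∀ X, B (J X) = - J (B X)) ∧
    (∀ X, A (B (J X)) = X) := by
  -- Key step: A ∘ J = -B
  have key : ∀ X, A (J X) = - B X := by
    intro X
    have hzero : ∀ Y, g (A (J X) + B X) Y = 0 := by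
      intro Y
      have h1 : g (A (J X)) Y + g (B X) Y = 0 := by
        rw [hA, hB, hJ]; ring
      simpa [map_add] using h1
    exact eq_neg_of_add_eq_zero_left (hg_nondeg _ hzero)
  -- J = -A ∘ B
  have hJAB : ∀ X, J X = - A (B X) := by
    intro X
    have := congrArg A (key X)
    rw [hA2, map_neg] at this
    exact this
  -- (A B)² = -1
  have hABAB : ∀ X, A (B (A (B X))) = - X := by
    intro X
    have := hJ2 X
    simp only [hJAB, map_neg, neg_neg] at this
    exact this
  -- B A B = -A
  have hBAB : ∀ X, B (A (B X)) = - A X := by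
    intro X
    have := congrArg A (hABAB X)
    rwa [hA2, map_neg] at this
  -- A B = - B A
  have hAB : ∀ X, A (B X) = - B (A X) := by
    intro X
    have := congrArg B (hBAB X)
    rwa [hB2, map_neg] at this
  refine ⟨hAB, ?_, ?_, ?_⟩
  · intro X
    rw [hJAB, hJAB (A X)]
    simp [hA2, hAB]
  · intro X
    rw [hJAB, hJAB (B X)]
    simp [hBAB, hB2]
  · intro X
    simp [hJAB, hABAB]
end

section
/- Let V be a finite-dimensional real vector space with a Born structure (g, h, ω, A, B, J). Then for all X, Y ∈ V the following invariance identities hold: g(AX,AY) = −g(X,Y), g(BX,BY) = g(X,Y), g(JX,JY) = −g(X,Y); h(AX,AY) = h(X,Y), h(BX,BY) = h(X,Y), h(JX,JY) = h(X,Y); ω(AX,AY) = −ω(X,Y), ω(BX,BY) = −ω(X,Y), ω(JX,JY) = ω(X,Y). -/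
/-- Invariance properties of the bilinear forms `g`, `h`, `ω` of a Born structure
under the recursion operators `A`, `B`, `J`. -/
theorem born_bilinear_forms_invariance
    (V : Type*) [AddCommGroup V] [Module ℝ V] [FiniteDimensional ℝ V]
    (g h ω : V →ₗ[ℝ] V →ₗ[ℝ] ℝ) (A B J : V →ₗ[ℝ] V)
    (hg_symm : ∀ X Y, g X Y = g Y X)
    (hg_nondeg : ∀ X, (∀ Y, g X Y = 0) → X = 0)
    (hh_symm : ∀ X Y, h X Y = h Y X)
    (hh_nondeg : ∀ X, (∀ Y, h X Y = 0) → X = 0)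
    (hω_alt : ∀ X, ω X X = 0)
    (hω_nondeg : ∀ X, (∀ Y, ω X Y = 0) → X = 0)
    (hA : ∀ X Y, g (A X) Y = ω X Y)
    (hB : ∀ X Y, g (B X) Y = h X Y)
    (hJ : ∀ X Y, ω (J X) Y = - h X Y)
    (hA2 : ∀ X, A (A X) = X)
    (hB2 : ∀ X, B (B X) = X)
    (hJ2 : ∀ X, J (J X) = -X) :
    (∀ X Y, g (A X) (A Y) = - g X Y) ∧
    (∀ X Y, g (B X) (B Y) = g X Y) ∧
    (∀ X Y, g (J X) (J Y) = - g X Y) ∧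
    (∀ X Y, h (A X) (A Y) = h X Y) ∧
    (∀ X Y, h (B X) (B Y) = h X Y) ∧
    (∀ X Y, h (J X) (J Y) = h X Y) ∧
    (∀ X Y, ω (A X) (A Y) = - ω X Y) ∧
    (∀ X Y, ω (B X) (B Y) = - ω X Y) ∧
    (∀ X Y, ω (J X) (J Y) = ω X Y) := by
  -- cancellation for g
  have g_cancel : ∀ u v : V, (∀ Y, g u Y = g v Y) → u = v := by
    intro u v huv
    have h0 : ∀ Y, g (u - v) Y = 0 := by
      intro Y
      have := huv Y
      simp [map_sub, this]
    exact sub_eq_zero.mp (hg_nondeg _ h0)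
  -- ω antisymmetric
  have hω_anti : ∀ X Y, ω X Y = - ω Y X := by
    intro X Y
    have := hω_alt (X + Y)
    simp [map_add, hω_alt X, hω_alt Y] at this
    linarith
  -- A (J X) = - B X
  have hAJ : ∀ X, A (J X) = - B X := by
    intro X
    apply g_cancel
    intro Y
    rw [hA, hJ, ← hB]
    simp
  -- A (B X) = - J X
  have hAB : ∀ X, A (B X) = - J X := by
    intro X
    have := congrArg A (hAJ X)
    rw [hA2, map_neg] at this
    -- this : J X = - A (B X)
    rw [this, neg_neg]
  -- A injective
  have hAinj : ∀ u v : V, A u = A v → u = v := by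
    intro u v huv
    have := congrArg A huv
    rwa [hA2, hA2] at this
  -- B (J X) = A X
  have hBJ : ∀ X, B (J X) = A X := by
    intro X
    apply hAinj
    rw [hAB (J X), hJ2, hA2, neg_neg]
  -- B (A X) = J X
  have hBA : ∀ X, B (A X) = J X := by
    intro X
    have := congrArg B (hBJ X)
    rw [hB2] at this
    exact this.symm
  -- key formula: g (J X) Z = h X (A Z)
  have hgJ : ∀ X Z, g (J X) Z = h X (A Z) := by
    intro X Z
    have hJeq : J X = - A (B X) := by rw [hAB, neg_neg]
    rw [hJeq, map_neg, LinearMap.neg_apply, hA, hω_anti (B X) Z, neg_neg,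
      ← hA, hg_symm, hB]
  -- h X (J Y) = - ω X Y
  have hhJ : ∀ X Y, h X (J Y) = - ω X Y := by
    intro X Y
    have := hJ (J Y) X
    rw [hJ2] at this
    have h2 : ω (-Y) X = - ω Y X := by simp
    rw [h2] at this
    rw [hh_symm]
    rw [hω_anti X Y]
    linarith
  refine ⟨?_, ?_, ?_, ?_, ?_, ?_, ?_, ?_, ?_⟩
  · intro X Y
    rw [hA, hω_anti, ← hA, hA2, hg_symm]
  · intro X Y
    rw [hB, hh_symm, ← hB, hB2, hg_symm]
  · intro X Y
    rw [hgJ, hAJ]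
    have : h X (-B Y) = - h X (B Y) := by simp
    rw [this, hh_symm, ← hB, hB2, hg_symm]
  · intro X Y
    rw [← hB, hBA, hgJ, hA2]
  · intro X Y
    have h1 : g (B (B X)) (B Y) = h (B X) (B Y) := hB _ _
    rw [hB2] at h1
    rw [← h1, hg_symm, hB, hh_symm]
  · intro X Y
    have := hJ (J X) (J Y)
    rw [hJ2] at this
    have h2 : ω (-X) (J Y) = - ω X (J Y) := by simp
    rw [h2] at this
    have h3 : h (J X) (J Y) = ω X (J Y) := by linarith
    rw [h3, hω_anti, hJ, neg_neg, hh_symm]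
  · intro X Y
    rw [← hA (A X) (A Y), hA2, hg_symm, hA, hω_anti]
  · intro X Y
    rw [← hA (B X) (B Y), hAB]
    have : g (- J X) (B Y) = - g (J X) (B Y) := by simp
    rw [this, hgJ, hAB]
    have h2 : h X (- J Y) = - h X (J Y) := by simp
    rw [h2, hhJ, neg_neg]
  · intro X Y
    rw [hJ, hhJ, neg_neg]
end

section
/- Let V be a finite-dimensional real vector space with a Born structure (g, h, ω, A, B, J), and let L₊ = ker(A − Id) and L₋ = ker(A + Id) be the ±1-eigenspaces of A. Then V = L₊ ⊕ L₋; ω(X,Y) = 0 and g(X,Y) = 0 whenever X and Y both lie in L₊ or both lie in L₋; h(X,Y) = 0 whenever X ∈ L₊ and Y ∈ L₋; J maps L₊ bijectively onto L₋ and L₋ bijectively onto L₊; and dim L₊ = dim L₋ = (dim V)/2. -/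
/-- The `±1`-eigenspaces `L₊`, `L₋` of `A` in a Born structure are complementary,
Lagrangian for `ω`, null for `g`, orthogonal for `h`, interchanged bijectively by
`J`, and of dimension `(dim V)/2`. -/
theorem born_eigenspaces_properties
    (V : Type*) [AddCommGroup V] [Module ℝ V] [FiniteDimensional ℝ V]
    (g h ω : V →ₗ[ℝ] V →ₗ[ℝ] ℝ) (A B J : V →ₗ[ℝ] V)
    (hg_symm : ∀ X Y, g X Y = g Y X)
    (hg_nondeg : ∀ X, (∀ Y, g X Y = 0) → X = 0)
    (hh_symm : ∀ X Y, h X Y = h Y X)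
    (hh_nondeg : ∀ X, (∀ Y, h X Y = 0) → X = 0)
    (hω_alt : ∀ X, ω X X = 0)
    (hω_nondeg : ∀ X, (∀ Y, ω X Y = 0) → X = 0)
    (hA : ∀ X Y, g (A X) Y = ω X Y)
    (hB : ∀ X Y, g (B X) Y = h X Y)
    (hJ : ∀ X Y, ω (J X) Y = - h X Y)
    (hA2 : ∀ X, A (A X) = X)
    (hB2 : ∀ X, B (B X) = X)
    (hJ2 : ∀ X, J (J X) = -X) :
    IsCompl (LinearMap.ker (A - LinearMap.id)) (LinearMap.ker (A + LinearMap.id)) ∧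
    (∀ X ∈ LinearMap.ker (A - LinearMap.id), ∀ Y ∈ LinearMap.ker (A - LinearMap.id),
      ω X Y = 0 ∧ g X Y = 0) ∧
    (∀ X ∈ LinearMap.ker (A + LinearMap.id), ∀ Y ∈ LinearMap.ker (A + LinearMap.id),
      ω X Y = 0 ∧ g X Y = 0) ∧
    (∀ X ∈ LinearMap.ker (A - LinearMap.id), ∀ Y ∈ LinearMap.ker (A + LinearMap.id),
      h X Y = 0) ∧
    Function.Injective J ∧
    Submodule.map J (LinearMap.ker (A - LinearMap.id)) = LinearMap.ker (A + LinearMap.id) ∧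
    Submodule.map J (LinearMap.ker (A + LinearMap.id)) = LinearMap.ker (A - LinearMap.id) ∧
    Module.finrank ℝ (LinearMap.ker (A - LinearMap.id))
      = Module.finrank ℝ (LinearMap.ker (A + LinearMap.id)) ∧
    2 * Module.finrank ℝ (LinearMap.ker (A - LinearMap.id)) = Module.finrank ℝ V := by
  -- skew-symmetry of ω
  have hskew : ∀ X Y : V, ω X Y = - ω Y X := by
    intro X Y
    have h1 := hω_alt (X + Y)
    simp only [map_add, LinearMap.add_apply, hω_alt] at h1
    linarith
  -- membership characterizations
  have memp : ∀ X : V, X ∈ LinearMap.ker (A - LinearMap.id) ↔ A X = X := by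
    intro X
    simp [LinearMap.mem_ker, LinearMap.sub_apply, sub_eq_zero]
  have memm : ∀ X : V, X ∈ LinearMap.ker (A + LinearMap.id) ↔ A X = -X := by
    intro X
    simp [LinearMap.mem_ker, LinearMap.add_apply, add_eq_zero_iff_eq_neg]
  -- ω(A(BX),Y) = h X Y
  have hABw : ∀ X Y : V, ω (A (B X)) Y = h X Y := by
    intro X Y
    rw [← hA (A (B X)) Y, hA2, hB]
  -- J = -A∘B
  have hJAB : ∀ X : V, J X = - A (B X) := by
    intro X
    have h0 : J X + A (B X) = 0 := by
      apply hω_nondeg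
      intro Y
      rw [map_add, LinearMap.add_apply, hJ, hABw]
      ring
    exact eq_neg_of_add_eq_zero_left h0
  -- B and A anticommute
  have hBA : ∀ X : V, B (A X) = - A (B X) := by
    intro X
    have h1 : ∀ Z : V, B (A (B Z)) = - A Z := by
      intro Z
      have h2 : J (J Z) = A (B (A (B Z))) := by
        simp only [hJAB, map_neg, neg_neg]
      have h3 : A (B (A (B Z))) = - Z := by rw [← h2, hJ2]
      have h4 := congrArg A h3
      rw [hA2, map_neg] at h4
      exact h4
    have := h1 (B X)
    rwa [hB2] at this
  -- A and J anticommute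
  have hAJ : ∀ X : V, A (J X) = - J (A X) := by
    intro X
    rw [hJAB X, hJAB (A X), hBA]
    simp only [map_neg, neg_neg]
  -- nullity on L₊
  have nullp : ∀ X ∈ LinearMap.ker (A - LinearMap.id), ∀ Y ∈ LinearMap.ker (A - LinearMap.id),
      ω X Y = 0 ∧ g X Y = 0 := by
    intro X hX Y hY
    rw [memp] at hX hY
    have e1 : ω X Y = g X Y := by rw [← hA, hX]
    have e2 : ω Y X = g Y X := by rw [← hA, hY]
    have e3 := hskew X Y
    have e4 := hg_symm X Y
    constructor <;> linarith
  -- nullity on L₋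
  have nullm : ∀ X ∈ LinearMap.ker (A + LinearMap.id), ∀ Y ∈ LinearMap.ker (A + LinearMap.id),
      ω X Y = 0 ∧ g X Y = 0 := by
    intro X hX Y hY
    rw [memm] at hX hY
    have e1 : ω X Y = - g X Y := by rw [← hA, hX, map_neg, LinearMap.neg_apply]
    have e2 : ω Y X = - g Y X := by rw [← hA, hY, map_neg, LinearMap.neg_apply]
    have e3 := hskew X Y
    have e4 := hg_symm X Y
    constructor <;> linarith
  -- J maps L₊ into L₋ and L₋ into L₊ (pointwise)
  have Jpm : ∀ X : V, A X = X → A (J X) = - J X := by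
    intro X hX
    rw [hAJ, hX]
  have Jmp : ∀ X : V, A X = -X → A (J X) = J X := by
    intro X hX
    rw [hAJ, hX, map_neg, neg_neg]
  -- J injective
  have hJinj : Function.Injective J := by
    intro X Y hXY
    have := congrArg J hXY
    rw [hJ2, hJ2] at this
    exact neg_injective this
  -- image submodules
  have mapJp : Submodule.map J (LinearMap.ker (A - LinearMap.id))
      = LinearMap.ker (A + LinearMap.id) := by
    ext Z
    simp only [Submodule.mem_map, memp, memm]
    constructor
    · rintro ⟨X, hX, rfl⟩
      exact Jpm X hX
    · intro hZ
      exact ⟨- J Z, by rw [map_neg, Jmp Z hZ], by rw [map_neg, hJ2, neg_neg]⟩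
  have mapJm : Submodule.map J (LinearMap.ker (A + LinearMap.id))
      = LinearMap.ker (A - LinearMap.id) := by
    ext Z
    simp only [Submodule.mem_map, memp, memm]
    constructor
    · rintro ⟨X, hX, rfl⟩
      exact Jmp X hX
    · intro hZ
      exact ⟨- J Z, by rw [map_neg, Jpm Z hZ], by rw [map_neg, hJ2, neg_neg]⟩
  -- h-orthogonality
  have horth : ∀ X ∈ LinearMap.ker (A - LinearMap.id), ∀ Y ∈ LinearMap.ker (A + LinearMap.id),
      h X Y = 0 := by
    intro X hX Y hY
    have hJX : J X ∈ LinearMap.ker (A + LinearMap.id) := by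
      rw [memm]; exact Jpm X ((memp X).mp hX)
    have := (nullm (J X) hJX Y hY).1
    have e := hJ X Y
    linarith
  -- complementarity
  have hcompl : IsCompl (LinearMap.ker (A - LinearMap.id)) (LinearMap.ker (A + LinearMap.id)) := by
    constructor
    · rw [disjoint_iff]
      ext X
      simp only [Submodule.mem_inf, Submodule.mem_bot]
      constructor
      · rintro ⟨h1, h2⟩
        rw [memp] at h1
        rw [memm] at h2
        have hx : X = -X := by nth_rewrite 1 [← h1]; exact h2
        have h3 : (2 : ℝ) • X = 0 := by
          rw [two_smul]
          nth_rewrite 2 [hx]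
          exact add_neg_cancel X
        rcases smul_eq_zero.mp h3 with h5 | h5
        · norm_num at h5
        · exact h5
      · rintro rfl
        exact ⟨Submodule.zero_mem _, Submodule.zero_mem _⟩
    · rw [codisjoint_iff, eq_top_iff]
      intro X _
      rw [Submodule.mem_sup]
      refine ⟨(1/2 : ℝ) • (X + A X), ?_, (1/2 : ℝ) • (X - A X), ?_, ?_⟩
      · rw [memp, map_smul, map_add, hA2]
        rw [add_comm (A X) X]
      · rw [memm, map_smul, map_sub, hA2, ← smul_neg, neg_sub]
      · rw [← smul_add]
        have : X + A X + (X - A X) = (2 : ℝ) • X := by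
          rw [two_smul]; abel
        rw [this, smul_smul]
        norm_num
  -- dimensions
  have hrank : Module.finrank ℝ (LinearMap.ker (A - LinearMap.id))
      = Module.finrank ℝ (LinearMap.ker (A + LinearMap.id)) := by
    rw [← mapJp]
    exact (LinearEquiv.finrank_eq
      (Submodule.equivMapOfInjective J hJinj (LinearMap.ker (A - LinearMap.id))))
  have hsum := Submodule.finrank_add_eq_of_isCompl hcompl
  refine ⟨hcompl, nullp, nullm, horth, hJinj, mapJp, mapJm, hrank, ?_⟩
  omega
end

section
/- Let 𝔤 be a finite-dimensional real Lie algebra with a Born structure (g, h, ω, A, B, J). Say A (respectively B) is integrable if both its +1- and −1-eigenspaces are Lie subalgebras of 𝔤, and say J is integrable if its Nijenhuis tensor N_J(X,Y) := [JX,JY] − J[JX,Y] − J[X,JY] − [X,Y] vanishes for all X, Y. Then: if A and B are integrable then J is integrable; if A and J are integrable then B is integrable; and if B and J are integrable then A is integrable. -/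
/-- A product structure `A` on a Lie algebra is integrable if both its `±1`-eigenspaces
are Lie subalgebras. -/
def ProductIntegrable {L : Type*} [LieRing L] [LieAlgebra ℝ L] (A : L →ₗ[ℝ] L) : Prop :=
  (∀ X Y, A X = X → A Y = Y → A ⁅X, Y⁆ = ⁅X, Y⁆) ∧
  (∀ X Y, A X = -X → A Y = -Y → A ⁅X, Y⁆ = -⁅X, Y⁆)

/-- A complex structure `J` on a Lie algebra is integrable if its Nijenhuis tensor
vanishes. -/
def ComplexIntegrable {L : Type*} [LieRing L] [LieAlgebra ℝ L] (J : L →ₗ[ℝ] L) : Prop :=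
  ∀ X Y, ⁅J X, J Y⁆ - J ⁅J X, Y⁆ - J ⁅X, J Y⁆ - ⁅X, Y⁆ = 0

section Aux

variable {L : Type*} [LieRing L] [LieAlgebra ℝ L]

/-- Nijenhuis tensor of `J`. -/
def NJ (J : L →ₗ[ℝ] L) (X Y : L) : L :=
  ⁅J X, J Y⁆ - J ⁅J X, Y⁆ - J ⁅X, J Y⁆ - ⁅X, Y⁆

lemma NJ_add_left (J : L →ₗ[ℝ] L) (X X' Y : L) :
    NJ J (X + X') Y = NJ J X Y + NJ J X' Y := by
  simp only [NJ, map_add, add_lie, lie_add]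
  abel

lemma NJ_skew (J : L →ₗ[ℝ] L) (X Y : L) : NJ J X Y = - NJ J Y X := by
  have e : ∀ a b : L, ⁅a, b⁆ = -⁅b, a⁆ := fun a b => by rw [← lie_skew]
  simp only [NJ]
  rw [e (J X) (J Y), e X Y, e (J X) Y, e X (J Y), map_neg, map_neg]
  abel

lemma NJ_add_right (J : L →ₗ[ℝ] L) (X Y Y' : L) :
    NJ J X (Y + Y') = NJ J X Y + NJ J X Y' := by
  rw [NJ_skew, NJ_add_left, NJ_skew J Y, NJ_skew J Y']
  abel

lemma NJ_J_left (J : L →ₗ[ℝ] L) (hJ2 : ∀ X, J (J X) = -X) (X Y : L) :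
    NJ J (J X) Y = - J (NJ J X Y) := by
  simp only [NJ, map_sub, map_neg, hJ2, neg_lie]
  abel

/-- The key identity, from integrability of `B` alone. -/
lemma keyI_of_B (B : L →ₗ[ℝ] L) (hB2 : ∀ X, B (B X) = X)
    (hBI : ProductIntegrable B) (x y : L) :
    B (⁅x, y⁆ + ⁅B x, B y⁆) = ⁅x, B y⁆ + ⁅B x, y⁆ := by
  have h1 : B ⁅x + B x, y + B y⁆ = ⁅x + B x, y + B y⁆ :=
    hBI.1 _ _ (by rw [map_add, hB2, add_comm]) (by rw [map_add, hB2, add_comm])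
  have h2 : B ⁅x - B x, y - B y⁆ = -⁅x - B x, y - B y⁆ :=
    hBI.2 _ _ (by rw [map_sub, hB2]; abel) (by rw [map_sub, hB2]; abel)
  have e1 : ⁅x + B x, y + B y⁆ = ⁅x, y⁆ + ⁅x, B y⁆ + ⁅B x, y⁆ + ⁅B x, B y⁆ := by
    simp only [lie_add, add_lie]; abel
  have e2 : ⁅x - B x, y - B y⁆ = ⁅x, y⁆ - ⁅x, B y⁆ - ⁅B x, y⁆ + ⁅B x, B y⁆ := by
    simp only [lie_sub, sub_lie]; abel
  rw [e1] at h1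
  rw [e2] at h2
  have h3 : B ((⁅x, y⁆ + ⁅x, B y⁆ + ⁅B x, y⁆ + ⁅B x, B y⁆) +
      (⁅x, y⁆ - ⁅x, B y⁆ - ⁅B x, y⁆ + ⁅B x, B y⁆)) =
      (⁅x, y⁆ + ⁅x, B y⁆ + ⁅B x, y⁆ + ⁅B x, B y⁆) +
      -(⁅x, y⁆ - ⁅x, B y⁆ - ⁅B x, y⁆ + ⁅B x, B y⁆) := by
    rw [map_add, h1, h2]
  have e3 : (⁅x, y⁆ + ⁅x, B y⁆ + ⁅B x, y⁆ + ⁅B x, B y⁆) +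
      (⁅x, y⁆ - ⁅x, B y⁆ - ⁅B x, y⁆ + ⁅B x, B y⁆) =
      (2:ℝ) • (⁅x, y⁆ + ⁅B x, B y⁆) := by
    rw [two_smul]; abel
  have e4 : (⁅x, y⁆ + ⁅x, B y⁆ + ⁅B x, y⁆ + ⁅B x, B y⁆) +
      -(⁅x, y⁆ - ⁅x, B y⁆ - ⁅B x, y⁆ + ⁅B x, B y⁆) =
      (2:ℝ) • (⁅x, B y⁆ + ⁅B x, y⁆) := by
    rw [two_smul]; abel
  rw [e3, e4, map_smul] at h3
  exact smul_right_injective L (two_ne_zero) h3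

/-- Core of direction 1: the Nijenhuis tensor of `J` vanishes on the `+1`-eigenspace
of `A`. -/
lemma dir1_core (A B J : L →ₗ[ℝ] L) (hB2 : ∀ X, B (B X) = X)
    (hJBA : ∀ X, J X = B (A X)) (hAB : ∀ X, A (B X) = - B (A X))
    (hAI : ProductIntegrable A) (hBI : ProductIntegrable B)
    (x y : L) (hx : A x = x) (hy : A y = y) : NJ J x y = 0 := by
  have hJx : J x = B x := by rw [hJBA, hx]
  have hJy : J y = B y := by rw [hJBA, hy]
  have hABx : A (B x) = -(B x) := by rw [hAB, hx]
  have hABy : A (B y) = -(B y) := by rw [hAB, hy]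
  have ha : A ⁅x, y⁆ = ⁅x, y⁆ := hAI.1 x y hx hy
  have hd : A ⁅B x, B y⁆ = -⁅B x, B y⁆ := hAI.2 _ _ hABx hABy
  have key := keyI_of_B B hB2 hBI x y
  have hw : J (B (⁅x, y⁆ + ⁅B x, B y⁆)) = ⁅B x, B y⁆ - ⁅x, y⁆ := by
    rw [hJBA, hAB, map_neg, hB2, map_add, ha, hd]; abel
  rw [key, map_add] at hw
  rw [NJ, hJx, hJy]
  have : ⁅B x, B y⁆ - J ⁅B x, y⁆ - J ⁅x, B y⁆ - ⁅x, y⁆ =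
      (⁅B x, B y⁆ - ⁅x, y⁆) - (J ⁅x, B y⁆ + J ⁅B x, y⁆) := by abel
  rw [this, hw, sub_self]

lemma dir1 (A B J : L →ₗ[ℝ] L) (hA2 : ∀ X, A (A X) = X) (hB2 : ∀ X, B (B X) = X)
    (hJ2 : ∀ X, J (J X) = -X)
    (hJBA : ∀ X, J X = B (A X)) (hAB : ∀ X, A (B X) = - B (A X))
    (hAI : ProductIntegrable A) (hBI : ProductIntegrable B) :
    ComplexIntegrable J := by
  have core := dir1_core A B J hB2 hJBA hAB hAI hBI
  intro X Y
  show NJ J X Y = 0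
  -- decompose X = p + J r, Y = p' + J r' with p, r, p', r' in the +1 eigenspace of A
  have decomp : ∀ Z : L, ∃ p r : L, A p = p ∧ A r = r ∧ Z = p + J r := by
    intro Z
    refine ⟨(2:ℝ)⁻¹ • (Z + A Z), B ((2:ℝ)⁻¹ • (Z - A Z)), ?_, ?_, ?_⟩
    · rw [map_smul, map_add, hA2, add_comm]
    · rw [hAB, map_smul, map_sub, hA2, show (2:ℝ)⁻¹ • (A Z - Z) = -((2:ℝ)⁻¹ • (Z - A Z))
        from by rw [← smul_neg, neg_sub], map_neg, neg_neg]
    · have hq : A ((2:ℝ)⁻¹ • (Z - A Z)) = -((2:ℝ)⁻¹ • (Z - A Z)) := by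
        rw [map_smul, map_sub, hA2, ← smul_neg, neg_sub]
      have hABq : A (B ((2:ℝ)⁻¹ • (Z - A Z))) = B ((2:ℝ)⁻¹ • (Z - A Z)) := by
        rw [hAB, hq, map_neg, neg_neg]
      have hJr : J (B ((2:ℝ)⁻¹ • (Z - A Z))) = (2:ℝ)⁻¹ • (Z - A Z) := by
        rw [hJBA, hABq, hB2]
      rw [hJr, ← smul_add, show Z + A Z + (Z - A Z) = (2:ℝ) • Z from by rw [two_smul]; abel,
        smul_smul]
      norm_num
  obtain ⟨p, r, hp, hr, hX⟩ := decomp X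
  obtain ⟨p', r', hp', hr', hY⟩ := decomp Y
  rw [hX, hY, NJ_add_left, NJ_add_right, NJ_add_right]
  have T1 : NJ J p p' = 0 := core p p' hp hp'
  have T2 : NJ J p (J r') = 0 := by
    rw [NJ_skew, NJ_J_left J hJ2, core r' p hr' hp, map_zero, neg_zero, neg_zero]
  have T3 : NJ J (J r) p' = 0 := by
    rw [NJ_J_left J hJ2, core r p' hr hp', map_zero, neg_zero]
  have T4 : NJ J (J r) (J r') = 0 := by
    rw [NJ_J_left J hJ2, NJ_skew, NJ_J_left J hJ2, core r' r hr' hr, map_zero, neg_zero,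
      neg_zero, map_zero, neg_zero]
  rw [T1, T2, T3, T4]
  abel

/-- The key identity, from integrability of `A` and of `J`. -/
lemma keyI_of_J (A B J : L →ₗ[ℝ] L) (hB2 : ∀ X, B (B X) = X)
    (hJ2 : ∀ X, J (J X) = -X)
    (hJBA : ∀ X, J X = B (A X)) (hAB : ∀ X, A (B X) = - B (A X))
    (hAI : ProductIntegrable A) (hJI : ComplexIntegrable J)
    (x y : L) (hx : A x = x) (hy : A y = y) :
    B (⁅x, y⁆ + ⁅B x, B y⁆) = ⁅x, B y⁆ + ⁅B x, y⁆ := by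
  have hJx : J x = B x := by rw [hJBA, hx]
  have hJy : J y = B y := by rw [hJBA, hy]
  have hABx : A (B x) = -(B x) := by rw [hAB, hx]
  have hABy : A (B y) = -(B y) := by rw [hAB, hy]
  have ha : A ⁅x, y⁆ = ⁅x, y⁆ := hAI.1 x y hx hy
  have hd : A ⁅B x, B y⁆ = -⁅B x, B y⁆ := hAI.2 _ _ hABx hABy
  have h0 := hJI x y
  rw [hJx, hJy] at h0
  have hu : J (⁅B x, y⁆ + ⁅x, B y⁆) = ⁅B x, B y⁆ - ⁅x, y⁆ := by
    rw [map_add, ← sub_eq_zero,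
      show J ⁅B x, y⁆ + J ⁅x, B y⁆ - (⁅B x, B y⁆ - ⁅x, y⁆) =
        -(⁅B x, B y⁆ - J ⁅B x, y⁆ - J ⁅x, B y⁆ - ⁅x, y⁆) from by abel, h0, neg_zero]
  have h3 := hJ2 (⁅B x, y⁆ + ⁅x, B y⁆)
  rw [hu] at h3
  -- h3 : J (⁅Bx,By⁆ - ⁅x,y⁆) = -(⁅Bx,y⁆ + ⁅x,By⁆)
  have h4 : J (⁅B x, B y⁆ - ⁅x, y⁆) = -(B (⁅x, y⁆ + ⁅B x, B y⁆)) := by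
    rw [hJBA, map_sub, hd, ha,
      show -⁅B x, B y⁆ - ⁅x, y⁆ = -(⁅x, y⁆ + ⁅B x, B y⁆) from by abel, map_neg]
  rw [h4] at h3
  have h5 : B (⁅x, y⁆ + ⁅B x, B y⁆) = ⁅B x, y⁆ + ⁅x, B y⁆ := by
    have := congrArg Neg.neg h3
    rwa [neg_neg, neg_neg] at this
  rw [h5]; abel

lemma dir2 (A B J : L →ₗ[ℝ] L) (hA2 : ∀ X, A (A X) = X) (hB2 : ∀ X, B (B X) = X)
    (hJ2 : ∀ X, J (J X) = -X)
    (hJBA : ∀ X, J X = B (A X)) (hAB : ∀ X, A (B X) = - B (A X))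
    (hAI : ProductIntegrable A) (hJI : ComplexIntegrable J) :
    ProductIntegrable B := by
  have key := keyI_of_J A B J hB2 hJ2 hJBA hAB hAI hJI
  constructor
  · intro X Y hX hY
    -- from B X = X : B (A X) = -(A X)
    have hBAX : B (A X) = -(A X) := by
      have h' := hAB X
      rw [hX] at h'
      exact (neg_eq_iff_eq_neg.mpr h').symm
    have hBAY : B (A Y) = -(A Y) := by
      have h' := hAB Y
      rw [hY] at h'
      exact (neg_eq_iff_eq_neg.mpr h').symm
    set x := (2:ℝ)⁻¹ • (X + A X) with hxdef
    set y := (2:ℝ)⁻¹ • (Y + A Y) with hydef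
    have hx : A x = x := by rw [hxdef, map_smul, map_add, hA2, add_comm]
    have hy : A y = y := by rw [hydef, map_smul, map_add, hA2, add_comm]
    have hXd : X = x + B x := by
      rw [hxdef, map_smul, map_add, hX, hBAX, ← smul_add,
        show X + A X + (X + -(A X)) = (2:ℝ) • X from by rw [two_smul]; abel, smul_smul]
      norm_num
    have hYd : Y = y + B y := by
      rw [hydef, map_smul, map_add, hY, hBAY, ← smul_add,
        show Y + A Y + (Y + -(A Y)) = (2:ℝ) • Y from by rw [two_smul]; abel, smul_smul]
      norm_num
    have k1 := key x y hx hy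
    have k2 : B (⁅x, B y⁆ + ⁅B x, y⁆) = ⁅x, y⁆ + ⁅B x, B y⁆ := by
      rw [← k1, hB2]
    calc B ⁅X, Y⁆ = B ((⁅x, y⁆ + ⁅B x, B y⁆) + (⁅x, B y⁆ + ⁅B x, y⁆)) := by
          rw [hXd, hYd]; congr 1; simp only [lie_add, add_lie]; abel
      _ = (⁅x, B y⁆ + ⁅B x, y⁆) + (⁅x, y⁆ + ⁅B x, B y⁆) := by rw [map_add, k1, k2]
      _ = ⁅X, Y⁆ := by rw [hXd, hYd]; simp only [lie_add, add_lie]; abel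
  · intro X Y hX hY
    -- from B X = -X : B (A X) = A X
    have hBAX : B (A X) = A X := by
      have h' := hAB X
      rw [hX, map_neg] at h'
      exact (neg_injective h').symm
    have hBAY : B (A Y) = A Y := by
      have h' := hAB Y
      rw [hY, map_neg] at h'
      exact (neg_injective h').symm
    set x := (2:ℝ)⁻¹ • (X + A X) with hxdef
    set y := (2:ℝ)⁻¹ • (Y + A Y) with hydef
    have hx : A x = x := by rw [hxdef, map_smul, map_add, hA2, add_comm]
    have hy : A y = y := by rw [hydef, map_smul, map_add, hA2, add_comm]
    have hXd : X = x - B x := by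
      rw [hxdef, map_smul, map_add, hX, hBAX, ← smul_sub,
        show X + A X - (-X + A X) = (2:ℝ) • X from by rw [two_smul]; abel, smul_smul]
      norm_num
    have hYd : Y = y - B y := by
      rw [hydef, map_smul, map_add, hY, hBAY, ← smul_sub,
        show Y + A Y - (-Y + A Y) = (2:ℝ) • Y from by rw [two_smul]; abel, smul_smul]
      norm_num
    have k1 := key x y hx hy
    have k2 : B (⁅x, B y⁆ + ⁅B x, y⁆) = ⁅x, y⁆ + ⁅B x, B y⁆ := by
      rw [← k1, hB2]
    calc B ⁅X, Y⁆ = B ((⁅x, y⁆ + ⁅B x, B y⁆) - (⁅x, B y⁆ + ⁅B x, y⁆)) := by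
          rw [hXd, hYd]; congr 1; simp only [lie_sub, sub_lie]; abel
      _ = (⁅x, B y⁆ + ⁅B x, y⁆) - (⁅x, y⁆ + ⁅B x, B y⁆) := by rw [map_sub, k1, k2]
      _ = -⁅X, Y⁆ := by rw [hXd, hYd]; simp only [lie_sub, sub_lie]; abel

lemma CI_neg (J : L →ₗ[ℝ] L) (hJI : ComplexIntegrable J) : ComplexIntegrable (-J) := by
  intro X Y
  have h0 := hJI X Y
  simp only [LinearMap.neg_apply, neg_lie, lie_neg, map_neg, neg_neg]
  exact h0

end Aux

/-- In a Born structure on a Lie algebra, if two of the three recursion operators are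
integrable, then so is the third. -/
theorem born_two_out_of_three_integrable
    (L : Type*) [LieRing L] [LieAlgebra ℝ L] [FiniteDimensional ℝ L]
    (g h ω : L →ₗ[ℝ] L →ₗ[ℝ] ℝ) (A B J : L →ₗ[ℝ] L)
    (hg_symm : ∀ X Y, g X Y = g Y X)
    (hg_nondeg : ∀ X, (∀ Y, g X Y = 0) → X = 0)
    (hh_symm : ∀ X Y, h X Y = h Y X)
    (hh_nondeg : ∀ X, (∀ Y, h X Y = 0) → X = 0)
    (hω_alt : ∀ X, ω X X = 0)
    (hω_nondeg : ∀ X, (∀ Y, ω X Y = 0) → X = 0)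
    (hA : ∀ X Y, g (A X) Y = ω X Y)
    (hB : ∀ X Y, g (B X) Y = h X Y)
    (hJ : ∀ X Y, ω (J X) Y = - h X Y)
    (hA2 : ∀ X, A (A X) = X)
    (hB2 : ∀ X, B (B X) = X)
    (hJ2 : ∀ X, J (J X) = -X) :
    (ProductIntegrable A ∧ ProductIntegrable B → ComplexIntegrable J) ∧
    (ProductIntegrable A ∧ ComplexIntegrable J → ProductIntegrable B) ∧
    (ProductIntegrable B ∧ ComplexIntegrable J → ProductIntegrable A) := by
  -- Derive algebraic relations among A, B, J from the bilinear form identities.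
  have hAJ : ∀ X, A (J X) = - B X := by
    intro X
    have hz : ∀ Y, g (A (J X) + B X) Y = 0 := by
      intro Y
      rw [map_add, LinearMap.add_apply, hA, hB, hJ]
      ring
    have h0 := hg_nondeg _ hz
    have := eq_neg_of_add_eq_zero_left h0
    exact this
  have hJAB : ∀ X, J X = - A (B X) := by
    intro X
    rw [← hA2 (J X), hAJ, map_neg]
  have hAB : ∀ X, A (B X) = - B (A X) := by
    intro X
    have h1 : A (B (A (B X))) = - X := by
      have h' := hJ2 X
      simp only [hJAB, map_neg, neg_neg] at h'
      exact h'
    have h2 : B (A (B X)) = - A X := by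
      rw [← hA2 (B (A (B X))), h1, map_neg]
    rw [← hB2 (A (B X)), h2, map_neg]
  have hJBA : ∀ X, J X = B (A X) := by
    intro X
    rw [hJAB, hAB, neg_neg]
  refine ⟨fun ⟨hAI, hBI⟩ => dir1 A B J hA2 hB2 hJ2 hJBA hAB hAI hBI,
    fun ⟨hAI, hJI⟩ => dir2 A B J hA2 hB2 hJ2 hJBA hAB hAI hJI,
    fun ⟨hBI, hJI⟩ => ?_⟩
  have hJ2' : ∀ X, (-J) ((-J) X) = -X := by
    intro X
    simp only [LinearMap.neg_apply, map_neg, neg_neg]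
    exact hJ2 X
  have hJBA' : ∀ X, (-J) X = A (B X) := by
    intro X
    rw [LinearMap.neg_apply, hJAB, neg_neg]
  have hAB' : ∀ X, B (A X) = - A (B X) := by
    intro X
    rw [hAB, neg_neg]
  exact dir2 B A (-J) hB2 hA2 hJ2' hJBA' hAB' hBI (CI_neg J hJI)
end

section
/- Let 𝔤 be a finite-dimensional real Lie algebra with a Born structure (g, h, ω, A, B, J), and let ∇ be the Levi-Civita connection of h. Then the Born structure is integrable (ω is closed, the Nijenhuis tensor of J vanishes, and the ±1-eigenspaces of A are Lie subalgebras) if and only if the ±1-eigenspaces of A are Lie subalgebras of 𝔤 and J is parallel, i.e. ∇_X(JY) = J(∇_X Y) for all X, Y ∈ 𝔤. -/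
/-- A Born structure on a Lie algebra is integrable if and only if the `±1`-eigenspaces
of `A` are Lie subalgebras and `J` is parallel for the Levi-Civita connection of `h`. -/
theorem born_integrable_iff_subalgebras_and_J_parallel
    (L : Type*) [LieRing L] [LieAlgebra ℝ L] [FiniteDimensional ℝ L]
    (g h ω : L →ₗ[ℝ] L →ₗ[ℝ] ℝ) (A B J : L →ₗ[ℝ] L)
    (hg_symm : ∀ X Y, g X Y = g Y X)
    (hg_nondeg : ∀ X, (∀ Y, g X Y = 0) → X = 0)
    (hh_symm : ∀ X Y, h X Y = h Y X)
    (hh_nondeg : ∀ X, (∀ Y, h X Y = 0) → X = 0)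
    (hω_alt : ∀ X, ω X X = 0)
    (hω_nondeg : ∀ X, (∀ Y, ω X Y = 0) → X = 0)
    (hA : ∀ X Y, g (A X) Y = ω X Y)
    (hB : ∀ X Y, g (B X) Y = h X Y)
    (hJ : ∀ X Y, ω (J X) Y = - h X Y)
    (hA2 : ∀ X, A (A X) = X)
    (hB2 : ∀ X, B (B X) = X)
    (hJ2 : ∀ X, J (J X) = -X)
    (D : L →ₗ[ℝ] L →ₗ[ℝ] L)
    (hKoszul : ∀ X Y Z, 2 * h (D X Y) Z = h ⁅X, Y⁆ Z - h Y ⁅X, Z⁆ - h X ⁅Y, Z⁆) :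
    ((∀ X Y Z, ω ⁅X, Y⁆ Z + ω ⁅Y, Z⁆ X + ω ⁅Z, X⁆ Y = 0) ∧
     (∀ X Y, ⁅J X, J Y⁆ - J ⁅J X, Y⁆ - J ⁅X, J Y⁆ - ⁅X, Y⁆ = 0) ∧
     (∀ X Y, A X = X → A Y = Y → A ⁅X, Y⁆ = ⁅X, Y⁆) ∧
     (∀ X Y, A X = -X → A Y = -Y → A ⁅X, Y⁆ = -⁅X, Y⁆)) ↔
    ((∀ X Y, A X = X → A Y = Y → A ⁅X, Y⁆ = ⁅X, Y⁆) ∧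
     (∀ X Y, A X = -X → A Y = -Y → A ⁅X, Y⁆ = -⁅X, Y⁆) ∧
     (∀ X Y, D X (J Y) = J (D X Y))) := by
  -- ω is skew-symmetric
  have hω_skew : ∀ X Y : L, ω X Y = - ω Y X := by
    intro X Y
    have h0 := hω_alt (X + Y)
    simp only [map_add, LinearMap.add_apply, hω_alt X, hω_alt Y] at h0
    linarith
  -- h (J X) Y = ω X Y
  have k1 : ∀ X Y : L, h (J X) Y = ω X Y := by
    intro X Y
    have h1 := hJ (J X) Y
    rw [hJ2] at h1
    simp only [map_neg, LinearMap.neg_apply] at h1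
    linarith
  -- ω X (J Y) = h X Y
  have k2 : ∀ X Y : L, ω X (J Y) = h X Y := by
    intro X Y
    rw [hω_skew, hJ, hh_symm]; ring
  -- h X (J Y) = - ω X Y
  have k3 : ∀ X Y : L, h X (J Y) = - ω X Y := by
    intro X Y
    rw [hh_symm, k1, hω_skew]
  -- reversing brackets
  have hωl : ∀ a b c : L, ω ⁅a, b⁆ c = - ω ⁅b, a⁆ c := by
    intro a b c
    rw [← lie_skew a b, map_neg, LinearMap.neg_apply]
  have hhl : ∀ a b c : L, h a ⁅b, c⁆ = - h a ⁅c, b⁆ := by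
    intro a b c
    rw [← lie_skew b c, map_neg]
  -- key identity (★):
  -- 2 h(∇_X (J Y) - J ∇_X Y, Z) = dω(X,JY,JZ) - dω(X,Y,Z) + ω(X, N(Y,Z))
  have star : ∀ X Y Z : L, 2 * h (D X (J Y) - J (D X Y)) Z =
      (ω ⁅X, J Y⁆ (J Z) + ω ⁅J Y, J Z⁆ X + ω ⁅J Z, X⁆ (J Y))
      - (ω ⁅X, Y⁆ Z + ω ⁅Y, Z⁆ X + ω ⁅Z, X⁆ Y)
      + ω X (⁅J Y, J Z⁆ - J ⁅J Y, Z⁆ - J ⁅Y, J Z⁆ - ⁅Y, Z⁆) := by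
    intro X Y Z
    have e1 := hKoszul X (J Y) Z
    have e2 := hKoszul X Y (J Z)
    have c0 : h (J (D X Y)) Z = - h (D X Y) (J Z) := by
      rw [k1, k3, hω_skew (D X Y) Z]; ring
    have a1 : ω ⁅X, J Y⁆ (J Z) = h ⁅X, J Y⁆ Z := k2 _ _
    have a2 : ω ⁅J Z, X⁆ (J Y) = - h Y ⁅X, J Z⁆ := by
      rw [k2, hh_symm, hhl]
    have a3 : h ⁅X, Y⁆ (J Z) = - ω ⁅X, Y⁆ Z := k3 _ _
    have a4 : ω ⁅Z, X⁆ Y = h (J Y) ⁅X, Z⁆ := by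
      rw [k1, hω_skew Y ⁅X, Z⁆, hωl]
    have a5 : ω X ⁅J Y, J Z⁆ = - ω ⁅J Y, J Z⁆ X := hω_skew _ _
    have a6 : ω X (J ⁅J Y, Z⁆) = h X ⁅J Y, Z⁆ := k2 _ _
    have a7 : ω X (J ⁅Y, J Z⁆) = h X ⁅Y, J Z⁆ := k2 _ _
    have a8 : ω X ⁅Y, Z⁆ = - ω ⁅Y, Z⁆ X := hω_skew _ _
    simp only [map_sub, LinearMap.sub_apply]
    linarith [e1, e2, c0, a1, a2, a3, a4, a5, a6, a7, a8]
  -- torsion-freeness: D X Y - D Y X = ⁅X, Y⁆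
  have tors : ∀ X Y : L, D X Y - D Y X = ⁅X, Y⁆ := by
    intro X Y
    have key : ∀ Z, h (D X Y - D Y X - ⁅X, Y⁆) Z = 0 := by
      intro Z
      have e1 := hKoszul X Y Z
      have e2 := hKoszul Y X Z
      have s1 : h ⁅Y, X⁆ Z = - h ⁅X, Y⁆ Z := by
        rw [← lie_skew X Y, map_neg, LinearMap.neg_apply]; ring
      simp only [map_sub, LinearMap.sub_apply]
      linarith [e1, e2, s1]
    exact sub_eq_zero.mp (hh_nondeg _ key)
  -- metricity: h (D X Y) Z + h Y (D X Z) = 0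
  have met : ∀ X Y Z : L, h (D X Y) Z = - h Y (D X Z) := by
    intro X Y Z
    have e1 := hKoszul X Y Z
    have e2 := hKoszul X Z Y
    have s1 : h Y (D X Z) = h (D X Z) Y := hh_symm _ _
    have s2 : h Z ⁅X, Y⁆ = h ⁅X, Y⁆ Z := hh_symm _ _
    have s3 : h Y ⁅X, Z⁆ = h ⁅X, Z⁆ Y := hh_symm _ _
    have s4 : h X ⁅Z, Y⁆ = - h X ⁅Y, Z⁆ := hhl _ _ _
    linarith [e1, e2, s1, s2, s3, s4]
  constructor
  · rintro ⟨hcl, hN, hp, hm⟩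
    refine ⟨hp, hm, fun X Y => ?_⟩
    have key : ∀ Z, h (D X (J Y) - J (D X Y)) Z = 0 := by
      intro Z
      have hs := star X Y Z
      rw [hN Y Z] at hs
      simp only [map_zero] at hs
      have d1 := hcl X (J Y) (J Z)
      have d2 := hcl X Y Z
      linarith [hs, d1, d2]
    exact sub_eq_zero.mp (hh_nondeg _ key)
  · rintro ⟨hp, hm, hpar⟩
    refine ⟨?_, ?_, hp, hm⟩
    · -- closedness of ω
      intro X Y Z
      -- ω (D a b) c = - ω b (D a c)
      have r : ∀ a b c : L, ω (D a b) c = - ω b (D a c) := by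
        intro a b c
        rw [← k1, ← hpar, met, k1]
      have b1 : (⁅X, Y⁆ : L) = D X Y - D Y X := (tors X Y).symm
      have b2 : (⁅Y, Z⁆ : L) = D Y Z - D Z Y := (tors Y Z).symm
      have b3 : (⁅Z, X⁆ : L) = D Z X - D X Z := (tors Z X).symm
      rw [b1, b2, b3]
      simp only [map_sub, LinearMap.sub_apply]
      have r1 := r X Y Z
      have r2 := r Y Z X
      have r3 := r Z X Y
      have s1 := hω_skew Y (D X Z)
      have s2 := hω_skew Z (D Y X)
      have s3 := hω_skew X (D Z Y)
      linarith [r1, r2, r3, s1, s2, s3]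
    · -- vanishing of the Nijenhuis tensor
      intro X Y
      have b1 : (⁅J X, J Y⁆ : L) = D (J X) (J Y) - D (J Y) (J X) := (tors _ _).symm
      have b2 : (⁅J X, Y⁆ : L) = D (J X) Y - D Y (J X) := (tors _ _).symm
      have b3 : (⁅X, J Y⁆ : L) = D X (J Y) - D (J Y) X := (tors _ _).symm
      have b4 : (⁅X, Y⁆ : L) = D X Y - D Y X := (tors _ _).symm
      rw [b1, b2, b3, b4, hpar (J X) Y, hpar (J Y) X, map_sub, map_sub,
        hpar X Y, hpar Y X, hJ2, hJ2]
      abel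
end

section
/- Let 𝔤 be a finite-dimensional real Lie algebra, h a nondegenerate symmetric bilinear form on 𝔤, J a linear endomorphism of 𝔤, and 𝔤₊, 𝔤₋ two Lie subalgebras of 𝔤. Then the following are equivalent: (i) J² = −Id, h(JX,JY) = h(X,Y) for all X,Y, J is parallel for the Levi-Civita connection of h (∇_X(JY) = J(∇_X Y) for all X,Y), 𝔤 = 𝔤₊ ⊕ 𝔤₋ as vector spaces, h(X,Y) = 0 for X ∈ 𝔤₊ and Y ∈ 𝔤₋, and J(𝔤₊) = 𝔤₋; (ii) there exist bilinear forms g and ω and endomorphisms A and B such that (g, h, ω, A, B, J) is an integrable Born structure on 𝔤 whose +1- and −1-eigenspaces of A are 𝔤₊ and 𝔤₋, respectively. -/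
/-- A Born structure on a real Lie algebra `L`: nondegenerate symmetric bilinear forms
`g`, `h`, a nondegenerate alternating bilinear form `ω`, and endomorphisms `A`, `B`, `J`
with `g(AX,Y) = ω(X,Y)`, `g(BX,Y) = h(X,Y)`, `ω(JX,Y) = −h(X,Y)`,
`A² = B² = Id` and `J² = −Id`. -/
def IsBornStructure {L : Type*} [LieRing L] [LieAlgebra ℝ L]
    (g h ω : L →ₗ[ℝ] L →ₗ[ℝ] ℝ) (A B J : L →ₗ[ℝ] L) : Prop :=
  (∀ X Y, g X Y = g Y X) ∧ (∀ X, (∀ Y, g X Y = 0) → X = 0) ∧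
  (∀ X Y, h X Y = h Y X) ∧ (∀ X, (∀ Y, h X Y = 0) → X = 0) ∧
  (∀ X, ω X X = 0) ∧ (∀ X, (∀ Y, ω X Y = 0) → X = 0) ∧
  (∀ X Y, g (A X) Y = ω X Y) ∧
  (∀ X Y, g (B X) Y = h X Y) ∧
  (∀ X Y, ω (J X) Y = - h X Y) ∧
  (∀ X, A (A X) = X) ∧ (∀ X, B (B X) = X) ∧ (∀ X, J (J X) = -X)

/-- Integrability of a Born structure: `ω` is closed, the Nijenhuis tensor of `J`
vanishes, and the `±1`-eigenspaces of `A` are Lie subalgebras. -/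
def IsIntegrableBornStructure {L : Type*} [LieRing L] [LieAlgebra ℝ L]
    (g h ω : L →ₗ[ℝ] L →ₗ[ℝ] ℝ) (A B J : L →ₗ[ℝ] L) : Prop :=
  IsBornStructure g h ω A B J ∧
  (∀ X Y Z, ω ⁅X, Y⁆ Z + ω ⁅Y, Z⁆ X + ω ⁅Z, X⁆ Y = 0) ∧
  (∀ X Y, ⁅J X, J Y⁆ - J ⁅J X, Y⁆ - J ⁅X, J Y⁆ - ⁅X, Y⁆ = 0) ∧
  (∀ X Y, A X = X → A Y = Y → A ⁅X, Y⁆ = ⁅X, Y⁆) ∧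
  (∀ X Y, A X = -X → A Y = -Y → A ⁅X, Y⁆ = -⁅X, Y⁆)

/-- An integrable Born structure on a Lie algebra is equivalent to a pseudo-Kähler
structure `(h, J)` together with a pair of complementary subalgebras that are
`h`-orthogonal and interchanged by `J`. -/
theorem integrable_born_iff_pseudoKahler_with_orthogonal_subalgebras
    (L : Type*) [LieRing L] [LieAlgebra ℝ L] [FiniteDimensional ℝ L]
    (h : L →ₗ[ℝ] L →ₗ[ℝ] ℝ)
    (hh_symm : ∀ X Y, h X Y = h Y X)
    (hh_nondeg : ∀ X, (∀ Y, h X Y = 0) → X = 0)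
    (J : L →ₗ[ℝ] L)
    (gp gm : LieSubalgebra ℝ L)
    (D : L →ₗ[ℝ] L →ₗ[ℝ] L)
    (hKoszul : ∀ X Y Z, 2 * h (D X Y) Z = h ⁅X, Y⁆ Z - h Y ⁅X, Z⁆ - h X ⁅Y, Z⁆) :
    ((∀ X, J (J X) = -X) ∧
     (∀ X Y, h (J X) (J Y) = h X Y) ∧
     (∀ X Y, D X (J Y) = J (D X Y)) ∧
     IsCompl gp.toSubmodule gm.toSubmodule ∧
     (∀ X ∈ gp, ∀ Y ∈ gm, h X Y = 0) ∧
     Submodule.map J gp.toSubmodule = gm.toSubmodule) ↔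
    (∃ g ω A B, IsIntegrableBornStructure g h ω A B J ∧
      LinearMap.ker (A - LinearMap.id) = gp.toSubmodule ∧
      LinearMap.ker (A + LinearMap.id) = gm.toSubmodule) := by
  -- Common consequences of the Koszul formula
  have htf : ∀ X Y : L, D X Y - D Y X = ⁅X, Y⁆ := by
    intro X Y
    rw [← sub_eq_zero]
    apply hh_nondeg
    intro Z
    have k1 := hKoszul X Y Z
    have k2 := hKoszul Y X Z
    have hb : (⁅Y, X⁆ : L) = -⁅X, Y⁆ := (lie_skew Y X).symm
    rw [hb] at k2
    simp only [map_sub, map_neg, LinearMap.sub_apply, LinearMap.neg_apply] at *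
    linarith
  have hmet : ∀ X Y Z : L, h (D X Y) Z = - h Y (D X Z) := by
    intro X Y Z
    have k1 := hKoszul X Y Z
    have k2 := hKoszul X Z Y
    have s1 := hh_symm ⁅X,Y⁆ Z
    have s2 := hh_symm ⁅X,Z⁆ Y
    have s3 := hh_symm Y (D X Z)
    have hb : (⁅Z, Y⁆ : L) = -⁅Y, Z⁆ := (lie_skew Z Y).symm
    rw [hb] at k2
    simp only [map_neg, LinearMap.neg_apply] at *
    linarith
  constructor
  · rintro ⟨hJ2, hJinv, hDJ, hcompl, horth0, hmap⟩
    have skewJ : ∀ a b : L, h (J a) b = - h a (J b) := by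
      intro a b
      have e := hJinv a (J b)
      rw [hJ2 b, map_neg] at e
      linarith
    have horth : ∀ X ∈ gp.toSubmodule, ∀ Y ∈ gm.toSubmodule, h X Y = 0 := by
      intro X hX Y hY
      exact horth0 X (gp.mem_toSubmodule.mp hX) Y (gm.mem_toSubmodule.mp hY)
    have horth' : ∀ X ∈ gm.toSubmodule, ∀ Y ∈ gp.toSubmodule, h X Y = 0 := by
      intro X hX Y hY
      rw [hh_symm]; exact horth Y hY X hX
    have hdec : ∀ X : L, ∃ a ∈ gp.toSubmodule, ∃ b ∈ gm.toSubmodule, a + b = X := by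
      intro X
      have : X ∈ gp.toSubmodule ⊔ gm.toSubmodule := by
        rw [hcompl.sup_eq_top]; trivial
      exact Submodule.mem_sup.mp this
    set π := gp.toSubmodule.linearProjOfIsCompl gm.toSubmodule hcompl with hπ
    set A : L →ₗ[ℝ] L := (2 : ℝ) • (gp.toSubmodule.subtype ∘ₗ π) - LinearMap.id with hA
    have hAp : ∀ a ∈ gp.toSubmodule, A a = a := by
      intro a ha
      have e : π a = ⟨a, ha⟩ := Submodule.linearProjOfIsCompl_apply_left hcompl ⟨a, ha⟩
      simp only [hA, LinearMap.sub_apply, LinearMap.smul_apply, LinearMap.comp_apply,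
        LinearMap.id_apply, Submodule.subtype_apply]
      rw [e]
      show (2:ℝ) • a - a = a
      module
    have hAm : ∀ b ∈ gm.toSubmodule, A b = -b := by
      intro b hb
      have e : π b = 0 := Submodule.linearProjOfIsCompl_apply_right hcompl ⟨b, hb⟩
      simp only [hA, LinearMap.sub_apply, LinearMap.smul_apply, LinearMap.comp_apply,
        LinearMap.id_apply, Submodule.subtype_apply]
      rw [e]
      show (2:ℝ) • ((0 : gp.toSubmodule) : L) - b = -b
      simp
    have hA2 : ∀ X, A (A X) = X := by
      intro X
      obtain ⟨a, ha, b, hb, rfl⟩ := hdec X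
      rw [map_add, hAp a ha, hAm b hb, map_add, hAp a ha, map_neg, hAm b hb, neg_neg]
    have hJpm : ∀ a ∈ gp.toSubmodule, J a ∈ gm.toSubmodule := by
      intro a ha
      rw [← hmap]
      exact Submodule.mem_map_of_mem ha
    have hJmp : ∀ b ∈ gm.toSubmodule, J b ∈ gp.toSubmodule := by
      intro b hb
      rw [← hmap] at hb
      obtain ⟨a, ha, rfl⟩ := hb
      rw [hJ2 a]
      exact Submodule.neg_mem _ ha
    have hanti : ∀ X, A (J X) = - J (A X) := by
      intro X
      obtain ⟨a, ha, b, hb, rfl⟩ := hdec X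
      rw [map_add, map_add, map_add, hAp a ha, hAm b hb, hAm _ (hJpm a ha),
        hAp _ (hJmp b hb), map_add, map_neg]
      abel
    have hAsa : ∀ X Y, h (A X) Y = h X (A Y) := by
      intro X Y
      obtain ⟨a, ha, b, hb, rfl⟩ := hdec X
      obtain ⟨c, hc, d, hd, rfl⟩ := hdec Y
      have e1 : A (a + b) = a - b := by
        rw [map_add, hAp a ha, hAm b hb, sub_eq_add_neg]
      have e2 : A (c + d) = c - d := by
        rw [map_add, hAp c hc, hAm d hd, sub_eq_add_neg]
      rw [e1, e2]
      have h1 : h a d = 0 := horth a ha d hd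
      have h2 : h b c = 0 := horth' b hb c hc
      simp only [map_add, map_sub, LinearMap.add_apply, LinearMap.sub_apply, h1, h2]
      ring
    -- the forms
    set ω : L →ₗ[ℝ] L →ₗ[ℝ] ℝ := -(h.compl₂ J) with hω
    have hωdef : ∀ X Y, ω X Y = - h X (J Y) := by
      intro X Y; simp [hω, LinearMap.compl₂_apply]
    set g : L →ₗ[ℝ] L →ₗ[ℝ] ℝ := ω ∘ₗ A with hg
    have hgdef : ∀ X Y, g X Y = - h (A X) (J Y) := by
      intro X Y; simp [hg, hωdef]
    set B : L →ₗ[ℝ] L := -(A ∘ₗ J) with hB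
    have hBdef : ∀ X, B X = - A (J X) := by intro X; simp [hB]
    -- the ±1 eigenspaces of A
    have hfixp : ∀ X, A X = X → X ∈ gp.toSubmodule := by
      intro X hAX
      obtain ⟨a, ha, b, hb, rfl⟩ := hdec X
      rw [map_add, hAp a ha, hAm b hb] at hAX
      have h2 : -b = b := by
        have := add_left_cancel hAX
        exact this
      have h3 : (2:ℝ) • b = 0 := by
        rw [two_smul]
        nth_rewrite 1 [← h2]
        abel
      have hb0 : b = 0 := by
        rcases smul_eq_zero.mp h3 with hc | hc
        · norm_num at hc
        · exact hc
      rw [hb0, add_zero]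
      exact ha
    have hfixm : ∀ X, A X = -X → X ∈ gm.toSubmodule := by
      intro X hAX
      obtain ⟨a, ha, b, hb, rfl⟩ := hdec X
      rw [map_add, hAp a ha, hAm b hb, neg_add] at hAX
      have h2 : a = -a := by
        have := add_right_cancel hAX
        exact this
      have h3 : (2:ℝ) • a = 0 := by
        rw [two_smul]
        nth_rewrite 1 [h2]
        abel
      have ha0 : a = 0 := by
        rcases smul_eq_zero.mp h3 with hc | hc
        · norm_num at hc
        · exact hc
      rw [ha0, zero_add]
      exact hb
    refine ⟨g, ω, A, B, ⟨⟨?_, ?_, hh_symm, hh_nondeg, ?_, ?_, ?_, ?_, ?_, hA2, ?_, hJ2⟩,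
      ?_, ?_, ?_, ?_⟩, ?_, ?_⟩
    · -- g symmetric
      intro X Y
      rw [hgdef, hgdef]
      have e2 := skewJ Y (A X)
      have e4 := hAsa Y (J X)
      have e5 := hh_symm (A X) (J Y)
      have e6 : h Y (A (J X)) = - h Y (J (A X)) := by
        rw [hanti X, map_neg]
      linarith
    · -- g nondegenerate
      intro X hX
      have hAX : A X = 0 := by
        apply hh_nondeg
        intro Z
        have e0 := hX (-(J Z))
        rw [hgdef] at e0
        have e : J (-(J Z)) = Z := by rw [map_neg, hJ2, neg_neg]
        rw [e] at e0
        linarith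
      have := hA2 X
      rw [hAX, map_zero] at this
      exact this.symm
    · -- ω alternating
      intro X
      rw [hωdef]
      have e1 := skewJ X X
      have e2 := hh_symm X (J X)
      linarith
    · -- ω nondegenerate
      intro X hX
      apply hh_nondeg
      intro Z
      have e0 := hX (-(J Z))
      rw [hωdef] at e0
      have e : J (-(J Z)) = Z := by rw [map_neg, hJ2, neg_neg]
      rw [e] at e0
      linarith
    · -- g (A X) Y = ω X Y
      intro X Y
      rw [hgdef, hωdef, hA2]
    · -- g (B X) Y = h X Y
      intro X Y
      rw [hgdef, hBdef, map_neg, hA2, map_neg]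
      simp only [LinearMap.neg_apply, neg_neg]
      exact hJinv X Y
    · -- ω (J X) Y = - h X Y
      intro X Y
      rw [hωdef, hJinv]
    · -- B ∘ B = id
      intro X
      rw [hBdef, hBdef, map_neg, map_neg, neg_neg, hanti (A (J X)), hA2, hJ2, neg_neg]
    · -- ω closed
      have key : ∀ X Y Z : L, ω ⁅X,Y⁆ Z = ω X (D Y Z) - ω Y (D X Z) := by
        intro X Y Z
        rw [hωdef, hωdef, hωdef]
        have e0 : h ⁅X,Y⁆ (J Z) = h (D X Y) (J Z) - h (D Y X) (J Z) := by
          rw [← htf X Y, map_sub, LinearMap.sub_apply]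
        have e1 := hmet X Y (J Z)
        have e2 := hmet Y X (J Z)
        rw [hDJ X Z] at e1
        rw [hDJ Y Z] at e2
        linarith
      intro X Y Z
      have e1 := key X Y Z
      have e2 := key Y Z X
      have e3 := key Z X Y
      have s1 : ω X ⁅Y,Z⁆ = ω X (D Y Z) - ω X (D Z Y) := by
        rw [← htf Y Z, map_sub]
      have s2 : ω Y ⁅Z,X⁆ = ω Y (D Z X) - ω Y (D X Z) := by
        rw [← htf Z X, map_sub]
      have s3 : ω Z ⁅X,Y⁆ = ω Z (D X Y) - ω Z (D Y X) := by
        rw [← htf X Y, map_sub]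
      have skw : ∀ a b : L, ω a b = - ω b a := by
        intro a b
        rw [hωdef, hωdef]
        have f1 := skewJ a b
        have f2 := hh_symm b (J a)
        linarith
      linarith [skw ⁅Y,Z⁆ X, skw ⁅Z,X⁆ Y, skw ⁅X,Y⁆ Z]
    · -- Nijenhuis
      intro X Y
      rw [← htf (J X) (J Y), ← htf (J X) Y, ← htf X (J Y), ← htf X Y]
      simp only [map_sub, ← hDJ, hJ2, map_neg]
      abel
    · -- plus eigenspace subalgebra
      intro X Y hX hY
      have hXp := gp.mem_toSubmodule.mp (hfixp X hX)
      have hYp := gp.mem_toSubmodule.mp (hfixp Y hY)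
      exact hAp _ (gp.mem_toSubmodule.mpr (gp.lie_mem hXp hYp))
    · -- minus eigenspace subalgebra
      intro X Y hX hY
      have hXm := gm.mem_toSubmodule.mp (hfixm X hX)
      have hYm := gm.mem_toSubmodule.mp (hfixm Y hY)
      exact hAm _ (gm.mem_toSubmodule.mpr (gm.lie_mem hXm hYm))
    · -- ker (A - id) = gp
      ext X
      simp only [LinearMap.mem_ker, LinearMap.sub_apply, LinearMap.id_apply, sub_eq_zero]
      exact ⟨hfixp X, hAp X⟩
    · -- ker (A + id) = gm
      ext X
      simp only [LinearMap.mem_ker, LinearMap.add_apply, LinearMap.id_apply,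
        add_eq_zero_iff_eq_neg]
      exact ⟨hfixm X, hAm X⟩
  · rintro ⟨g, ω, A, B, ⟨⟨hg_symm, hg_nd, -, -, hω_alt, hω_nd, hgA, hgB, hωJ, hA2, hB2, hJ2⟩,
      hcoc, hN, -, -⟩, hkp, hkm⟩
    have hω_skew : ∀ a b : L, ω a b = - ω b a := by
      intro a b
      have e := hω_alt (a + b)
      have e1 := hω_alt a
      have e2 := hω_alt b
      simp only [map_add, LinearMap.add_apply] at e
      linarith
    have hωh : ∀ a b : L, ω a b = h (J a) b := by
      intro a b
      have e := hωJ (-(J a)) b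
      rw [map_neg, hJ2, neg_neg] at e
      have e2 : h (-(J a)) b = - h (J a) b := by rw [map_neg, LinearMap.neg_apply]
      linarith
    have hJinv : ∀ X Y : L, h (J X) (J Y) = h X Y := by
      intro X Y
      have e1 := hωJ (J X) (J Y)
      rw [hJ2, map_neg, LinearMap.neg_apply] at e1
      have e2 := hω_skew X (J Y)
      have e3 := hωJ Y X
      have e4 := hh_symm Y X
      linarith
    have skewJ : ∀ a b : L, h (J a) b = - h a (J b) := by
      intro a b
      have e := hJinv a (J b)
      rw [hJ2, map_neg] at e
      linarith
    have hc : ∀ X Y Z : L, h (J ⁅X,Y⁆) Z + h (J ⁅Y,Z⁆) X + h (J ⁅Z,X⁆) Y = 0 := by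
      intro X Y Z
      have e := hcoc X Y Z
      rw [hωh, hωh, hωh] at e
      exact e
    have hmem_p : ∀ X : L, X ∈ gp.toSubmodule ↔ A X = X := by
      intro X
      rw [← hkp, LinearMap.mem_ker, LinearMap.sub_apply, LinearMap.id_apply, sub_eq_zero]
    have hmem_m : ∀ X : L, X ∈ gm.toSubmodule ↔ A X = -X := by
      intro X
      rw [← hkm, LinearMap.mem_ker, LinearMap.add_apply, LinearMap.id_apply,
        add_eq_zero_iff_eq_neg]
    have hBAJ : ∀ X, B X = - A (J X) := by
      intro X
      rw [← sub_eq_zero]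
      apply hg_nd
      intro Y
      have e1 := hgB X Y
      have e2 := hgA (J X) Y
      have e3 := hωJ X Y
      simp only [map_sub, map_neg, LinearMap.sub_apply, LinearMap.neg_apply]
      linarith
    have hAJAJ : ∀ X, A (J (A (J X))) = X := by
      intro X
      have e0 := hB2 X
      rw [hBAJ X, map_neg, hBAJ (A (J X)), neg_neg] at e0
      exact e0
    have hdag : ∀ X, J (A (J X)) = A X := by
      intro X
      have e1 := congrArg A (hAJAJ X)
      rw [hA2] at e1
      exact e1
    have hanti : ∀ X, A (J X) = - J (A X) := by
      intro X
      have e2 := hdag (J X)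
      rw [hJ2, map_neg, map_neg] at e2
      exact e2.symm
    have hpar : ∀ X Y : L, D X (J Y) = J (D X Y) := by
      intro X Y
      rw [← sub_eq_zero]
      apply hh_nondeg
      intro Z
      rw [map_sub, LinearMap.sub_apply, sub_eq_zero]
      have k1 := hKoszul X (J Y) Z
      have k2 := hKoszul X Y (J Z)
      have hjd : h (J (D X Y)) Z = - h (D X Y) (J Z) := skewJ _ _
      have F1 := skewJ ⁅X,Y⁆ Z
      have F2 := skewJ Y ⁅X,Z⁆
      have F3 := hh_symm X ⁅J Y,Z⁆
      have F4 := hh_symm Y ⁅X,J Z⁆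
      have F5 := hh_symm X ⁅Y,J Z⁆
      have F6 := hh_symm Y (J ⁅X,Z⁆)
      have F2' := hh_symm (J Y) ⁅X,Z⁆
      have C1 := hc X Y Z
      have C2 := hc X (J Y) (J Z)
      have F7 := hJinv ⁅X,J Y⁆ Z
      have F8 := hJinv ⁅J Z,X⁆ Y
      have F9 : h ⁅J Z,X⁆ Y = - h ⁅X,J Z⁆ Y := by
        rw [← lie_skew X (J Z), map_neg, LinearMap.neg_apply, neg_neg]
      have F12 : h (J ⁅Z,X⁆) Y = - h (J ⁅X,Z⁆) Y := by
        rw [← lie_skew X Z, map_neg, map_neg, LinearMap.neg_apply, neg_neg]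
      have hNv : J ⁅J Y, J Z⁆ = J ⁅Y,Z⁆ - ⁅J Y, Z⁆ - ⁅Y, J Z⁆ := by
        have nn := hN Y Z
        have nn' : (⁅J Y, J Z⁆ : L) = J ⁅J Y, Z⁆ + J ⁅Y, J Z⁆ + ⁅Y, Z⁆ := by
          rw [← sub_eq_zero]
          rw [← nn]
          abel
        rw [nn', map_add, map_add, hJ2, hJ2]
        abel
      have F10 : h (J ⁅J Y, J Z⁆) X
          = h (J ⁅Y,Z⁆) X - h ⁅J Y, Z⁆ X - h ⁅Y, J Z⁆ X := by
        rw [hNv]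
        simp only [map_sub, LinearMap.sub_apply]
      linarith
    have horth : ∀ X ∈ gp, ∀ Y ∈ gm, h X Y = 0 := by
      intro X hX Y hY
      have hAX : A X = X := (hmem_p X).mp (gp.mem_toSubmodule.mpr hX)
      have hAY : A Y = -Y := (hmem_m Y).mp (gm.mem_toSubmodule.mpr hY)
      have e1 := hωJ X Y
      have e2 := hgA (J X) Y
      have gskew : ∀ a b : L, g (A a) b = - g a (A b) := by
        intro a b
        have f1 := hgA a b
        have f2 := hω_skew a b
        have f3 := hgA b a
        have f4 := hg_symm a (A b)
        linarith
      have e4 := gskew (J X) Y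
      have e5 : A (J X) = -(J X) := by rw [hanti X, hAX]
      rw [e5] at e2 e4
      rw [hAY] at e4
      have m1 : g (-(J X)) Y = - g (J X) Y := by rw [map_neg, LinearMap.neg_apply]
      have m2 : g (J X) (-Y) = - g (J X) Y := by rw [map_neg]
      linarith
    have hcompl : IsCompl gp.toSubmodule gm.toSubmodule := by
      constructor
      · rw [Submodule.disjoint_def]
        intro X hXp hXm
        have h1 := (hmem_p X).mp hXp
        have h2 := (hmem_m X).mp hXm
        have h3 : (2:ℝ) • X = 0 := by
          rw [two_smul]
          nth_rewrite 1 [← h1]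
          rw [h2]
          abel
        rcases smul_eq_zero.mp h3 with hce | hce
        · norm_num at hce
        · exact hce
      · rw [codisjoint_iff, eq_top_iff]
        intro X _
        apply Submodule.mem_sup.mpr
        refine ⟨(2⁻¹ : ℝ) • (X + A X), ?_, (2⁻¹ : ℝ) • (X - A X), ?_, ?_⟩
        · rw [hmem_p, map_smul, map_add, hA2, add_comm]
        · rw [hmem_m, map_smul, map_sub, hA2]
          module
        · module
    have hmapJ : Submodule.map J gp.toSubmodule = gm.toSubmodule := by
      ext Y
      constructor
      · rintro ⟨X, hX, rfl⟩
        rw [hmem_m, hanti X, (hmem_p X).mp hX]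
      · intro hY
        have hAY := (hmem_m Y).mp hY
        refine ⟨-(J Y), ?_, ?_⟩
        · rw [SetLike.mem_coe, hmem_p]
          simp [hanti Y, hAY]
        · rw [map_neg, hJ2, neg_neg]
    exact ⟨hJ2, hJinv, hpar, hcompl, horth, hmapJ⟩
end

section
/- Let 𝔤 be a finite-dimensional real Lie algebra with an integrable Born structure (g, h, ω, A, B, J) and let 𝔤₊, 𝔤₋ be the ±1-eigenspaces of A, so that 𝔤 = 𝔤₊ ⊕ 𝔤₋ as vector spaces; let pr₊ and pr₋ denote the corresponding projections. Define φ : 𝔤₋ → End(𝔤₊) by φ(X)Y := pr₊([X,Y]) and ρ : 𝔤₊ → End(𝔤₋) by ρ(Y)X := pr₋([Y,X]). Then φ and ρ are Lie algebra representations, i.e. φ([X,X']) = φ(X)∘φ(X') − φ(X')∘φ(X) for all X, X' ∈ 𝔤₋ and ρ([Y,Y']) = ρ(Y)∘ρ(Y') − ρ(Y')∘ρ(Y) for all Y, Y' ∈ 𝔤₊; moreover Q := J|_{𝔤₊} is a linear bijection from 𝔤₊ onto 𝔤₋ satisfying h(QX,QY) = h(X,Y) for all X, Y ∈ 𝔤₊.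 -/
/-- Every Born Lie algebra is a bicross product: the maps `φ(X)Y = pr₊[X,Y]` and
`ρ(Y)X = pr₋[Y,X]` are Lie algebra representations and `Q = J|_{𝔤₊}` is a linear
isometric bijection from `𝔤₊` onto `𝔤₋`. -/
theorem born_is_bicross_product
    (L : Type*) [LieRing L] [LieAlgebra ℝ L] [FiniteDimensional ℝ L]
    (g h ω : L →ₗ[ℝ] L →ₗ[ℝ] ℝ) (A B J : L →ₗ[ℝ] L)
    (hBorn : IsIntegrableBornStructure g h ω A B J)
    (prP prM : L →ₗ[ℝ] L)
    (hprP : ∀ X, prP X ∈ LinearMap.ker (A - LinearMap.id))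
    (hprM : ∀ X, prM X ∈ LinearMap.ker (A + LinearMap.id))
    (hpr : ∀ X, prP X + prM X = X) :
    (∀ X X' : L, X ∈ LinearMap.ker (A + LinearMap.id) →
      X' ∈ LinearMap.ker (A + LinearMap.id) →
      ∀ Y ∈ LinearMap.ker (A - LinearMap.id),
        prP ⁅⁅X, X'⁆, Y⁆ = prP ⁅X, prP ⁅X', Y⁆⁆ - prP ⁅X', prP ⁅X, Y⁆⁆) ∧
    (∀ Y Y' : L, Y ∈ LinearMap.ker (A - LinearMap.id) →
      Y' ∈ LinearMap.ker (A - LinearMap.id) →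
      ∀ X ∈ LinearMap.ker (A + LinearMap.id),
        prM ⁅⁅Y, Y'⁆, X⁆ = prM ⁅Y, prM ⁅Y', X⁆⁆ - prM ⁅Y', prM ⁅Y, X⁆⁆) ∧
    Set.InjOn J (LinearMap.ker (A - LinearMap.id)) ∧
    Submodule.map J (LinearMap.ker (A - LinearMap.id)) = LinearMap.ker (A + LinearMap.id) ∧
    (∀ X ∈ LinearMap.ker (A - LinearMap.id), ∀ Y ∈ LinearMap.ker (A - LinearMap.id),
      h (J X) (J Y) = h X Y) := by
 
  obtain ⟨⟨_gsymm, gnd, hsymm, _hnd, walt, _wnd, gAw, gBh, wJh, AA, BB, JJ⟩,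
    _wclosed, _nij, subP, subM⟩ := hBorn
  have memP : ∀ X : L, X ∈ LinearMap.ker (A - LinearMap.id) ↔ A X = X := by
    intro X
    rw [LinearMap.mem_ker, LinearMap.sub_apply, LinearMap.id_apply, sub_eq_zero]
  have memM : ∀ X : L, X ∈ LinearMap.ker (A + LinearMap.id) ↔ A X = -X := by
    intro X
    rw [LinearMap.mem_ker, LinearMap.add_apply, LinearMap.id_apply, add_eq_zero_iff_eq_neg]
  have half : ∀ X : L, X = -X → X = 0 := by
    intro X hX
    have h2 : (2:ℝ) • X = 0 := by rw [two_smul]; nth_rewrite 2 [hX]; simp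
    rcases smul_eq_zero.mp h2 with h | h
    · norm_num at h
    · exact h
  have prM_eqP : ∀ Z, A Z = Z → prM Z = 0 := by
    intro Z hZ
    have h1 : A (prM Z) = -(prM Z) := (memM _).mp (hprM Z)
    have h2 : A (prP Z) = prP Z := (memP _).mp (hprP Z)
    have h3 : prM Z = Z - prP Z := eq_sub_of_add_eq' (hpr Z)
    have h4 : A (prM Z) = prM Z := by rw [h3, map_sub, hZ, h2]
    exact half _ (h4.symm.trans h1)
  have prP_eqM : ∀ Z, A Z = -Z → prP Z = 0 := by
    intro Z hZ
    have h1 : A (prP Z) = prP Z := (memP _).mp (hprP Z)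
    have h2 : A (prM Z) = -(prM Z) := (memM _).mp (hprM Z)
    have h3 : prP Z = Z - prM Z := eq_sub_of_add_eq (hpr Z)
    have h4 : A (prP Z) = -(prP Z) := by rw [h3, map_sub, hZ, h2]; abel
    exact half _ (h1.symm.trans h4)
  have key1 : ∀ X W : L, A X = -X → prP ⁅X, W⁆ = prP ⁅X, prP W⁆ := by
    intro X W hX
    have hsplit : ⁅X, W⁆ = ⁅X, prP W⁆ + ⁅X, prM W⁆ := by rw [← lie_add, hpr]
    rw [hsplit, map_add, prP_eqM _ (subM X (prM W) hX ((memM _).mp (hprM W))), add_zero]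
  have key2 : ∀ Y W : L, A Y = Y → prM ⁅Y, W⁆ = prM ⁅Y, prM W⁆ := by
    intro Y W hY
    have hsplit : ⁅Y, W⁆ = ⁅Y, prP W⁆ + ⁅Y, prM W⁆ := by rw [← lie_add, hpr]
    rw [hsplit, map_add, prM_eqP _ (subP Y (prP W) hY ((memP _).mp (hprP W))), zero_add]
  -- algebraic identities for A, B, J
  have hAJB : ∀ X, A (J X) = -(B X) := by
    intro X
    have key : ∀ Y, g (A (J X) + B X) Y = 0 := by
      intro Y
      rw [map_add, LinearMap.add_apply, gAw, gBh, wJh]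
      ring
    exact eq_neg_of_add_eq_zero_left (gnd _ key)
  have hJAB : ∀ X, J X = -(A (B X)) := by
    intro X
    have hc := congrArg A (hAJB X)
    rw [AA, map_neg] at hc
    exact hc
  have h1 : ∀ Z, A (B (A (B Z))) = -Z := by
    intro Z
    have hc := JJ Z
    rw [hJAB (J Z), hJAB Z] at hc
    simpa using hc
  have h2 : ∀ Z, B (A (B Z)) = -(A Z) := by
    intro Z
    have hc := congrArg A (h1 Z)
    rw [AA, map_neg] at hc
    exact hc
  have hBAx : ∀ X, B (A X) = -(A (B X)) := by
    intro X
    have hc := h2 (B X)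
    rw [BB] at hc
    exact hc
  have hAJcomm : ∀ X, A (J X) = -(J (A X)) := by
    intro X
    rw [hAJB X, hJAB (A X), hBAx X]
    simp [AA]
  have hJP : ∀ X, A X = X → A (J X) = -(J X) := by
    intro X hX
    rw [hAJcomm, hX]
  have hJM : ∀ X, A X = -X → A (J X) = J X := by
    intro X hX
    rw [hAJcomm, hX, map_neg, neg_neg]
  have wskew : ∀ X Y, ω X Y = -(ω Y X) := by
    intro X Y
    have hc := walt (X + Y)
    simp only [map_add, LinearMap.add_apply] at hc
    have hx := walt X
    have hy := walt Y
    linarith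
  have hJw : ∀ X Y, h (J X) Y = ω X Y := by
    intro X Y
    have hc := wJh (J X) Y
    rw [JJ, map_neg, LinearMap.neg_apply] at hc
    linarith
  refine ⟨?_, ?_, ?_, ?_, ?_⟩
  · intro X X' hX hX' Y _hY
    rw [memM] at hX hX'
    rw [lie_lie, map_sub, key1 X ⁅X', Y⁆ hX, key1 X' ⁅X, Y⁆ hX']
  · intro Y Y' hY hY' X _hX
    rw [memP] at hY hY'
    rw [lie_lie, map_sub, key2 Y ⁅Y', X⁆ hY, key2 Y' ⁅Y, X⁆ hY']
  · intro X _hX X' _hX' hJeq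
    have hc := congrArg J hJeq
    rw [JJ, JJ] at hc
    exact neg_injective hc
  · ext Z
    simp only [Submodule.mem_map]
    constructor
    · rintro ⟨X, hX, rfl⟩
      exact (memM _).mpr (hJP X ((memP X).mp hX))
    · intro hZ
      have hZ' := (memM Z).mp hZ
      refine ⟨-(J Z), (memP _).mpr ?_, ?_⟩
      · rw [map_neg, hJM Z hZ']
      · rw [map_neg, JJ, neg_neg]
  · intro X _hX Y _hY
    calc h (J X) (J Y) = ω X (J Y) := hJw X (J Y)
      _ = -(ω (J Y) X) := wskew _ _
      _ = h Y X := by rw [wJh]; ring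
      _ = h X Y := hsymm _ _
end

section
/- Let 𝔤 be a finite-dimensional real Lie algebra which is the vector space direct sum of two Lie subalgebras 𝔤₊ and 𝔤₋, with projections pr₊, pr₋. Let h₋ be a nondegenerate symmetric bilinear form on 𝔤₋, let Q : 𝔤₊ → 𝔤₋ be a linear isomorphism, set h₊(X,Y) := h₋(QX,QY) on 𝔤₊, and let h be the bilinear form on 𝔤 restricting to h₊ on 𝔤₊, to h₋ on 𝔤₋, and with h(𝔤₊,𝔤₋) = 0. Let J be the endomorphism of 𝔤 with J(X₊) = QX₊ for X₊ ∈ 𝔤₊ and J(X₋) = −Q⁻¹X₋ for X₋ ∈ 𝔤₋. Define φ(X₋)Y₊ := pr₊([X₋,Y₊]) and ρ(X₊)Y₋ := pr₋([X₊,Y₋]). Let ∇, ∇⁺, ∇⁻ be the Levi-Civita connections of h on 𝔤, of h₊ on 𝔤₊, and of h₋ on 𝔤₋. Then ∇_X(JY) = J(∇_X Y) for all X, Y ∈ 𝔤 (equivalently, the associated Born structure is integrable) if and only if: (1) φ(X₋)ᵃ Y₊ = Q⁻¹(∇⁻_{X₋}(QY₊)) for all X₋ ∈ 𝔤₋, Y₊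 ∈ 𝔤₊ (antisymmetric part taken with respect to h₊); (2) φ(QX₊)ˢ Y₊ = φ(QY₊)ˢ X₊ for all X₊, Y₊ ∈ 𝔤₊; (3) ρ(X₊)ᵃ Y₋ = Q(∇⁺_{X₊}(Q⁻¹Y₋)) for all X₊ ∈ 𝔤₊, Y₋ ∈ 𝔤₋ (antisymmetric part with respect to h₋); (4) ρ(X₊)ˢ(QY₊) = ρ(Y₊)ˢ(QX₊) for all X₊, Y₊ ∈ 𝔤₊. -/
set_option maxHeartbeats 3200000 in

/-- Integrability criterion for the Born structure associated with bicross product data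
`(𝔤₊, 𝔤₋, h₋, Q, φ, ρ)`, where `φ(X₋)Y₊ = pr₊[X₋,Y₊]` and `ρ(X₊)Y₋ = pr₋[X₊,Y₋]`.
The conditions on the `h`-symmetric and `h`-antisymmetric parts of `φ` and `ρ` are
expressed by testing against the nondegenerate bilinear forms. -/
theorem bicross_born_integrability
    (L : Type*) [LieRing L] [LieAlgebra ℝ L] [FiniteDimensional ℝ L]
    (P M : LieSubalgebra ℝ L)
    (hcompl : IsCompl P.toSubmodule M.toSubmodule)
    (prP prM : L →ₗ[ℝ] L)
    (hprP : ∀ X, prP X ∈ P) (hprM : ∀ X, prM X ∈ M)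
    (hpr : ∀ X, prP X + prM X = X)
    (hm : (↥M) →ₗ[ℝ] (↥M) →ₗ[ℝ] ℝ)
    (hm_symm : ∀ X Y, hm X Y = hm Y X)
    (hm_nondeg : ∀ X, (∀ Y, hm X Y = 0) → X = 0)
    (Q : (↥P) ≃ₗ[ℝ] (↥M))
    (h : L →ₗ[ℝ] L →ₗ[ℝ] ℝ)
    (h_PP : ∀ X Y : ↥P, h (X : L) (Y : L) = hm (Q X) (Q Y))
    (h_MM : ∀ X Y : ↥M, h (X : L) (Y : L) = hm X Y)
    (h_PM : ∀ (X : ↥P) (Y : ↥M), h (X : L) (Y : L) = 0)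
    (h_MP : ∀ (X : ↥M) (Y : ↥P), h (X : L) (Y : L) = 0)
    (J : L →ₗ[ℝ] L)
    (hJP : ∀ X : ↥P, J (X : L) = ((Q X : ↥M) : L))
    (hJM : ∀ X : ↥M, J (X : L) = -((Q.symm X : ↥P) : L))
    (D : L →ₗ[ℝ] L →ₗ[ℝ] L)
    (hKoszul : ∀ X Y Z : L, 2 * h (D X Y) Z = h ⁅X, Y⁆ Z - h Y ⁅X, Z⁆ - h X ⁅Y, Z⁆)
    (Dp : (↥P) →ₗ[ℝ] (↥P) →ₗ[ℝ] (↥P))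
    (hKp : ∀ X Y Z : ↥P, 2 * h ((Dp X Y : ↥P) : L) (Z : L)
      = h ((⁅X, Y⁆ : ↥P) : L) (Z : L) - h (Y : L) ((⁅X, Z⁆ : ↥P) : L)
        - h (X : L) ((⁅Y, Z⁆ : ↥P) : L))
    (Dm : (↥M) →ₗ[ℝ] (↥M) →ₗ[ℝ] (↥M))
    (hKm : ∀ X Y Z : ↥M, 2 * hm (Dm X Y) Z = hm ⁅X, Y⁆ Z - hm Y ⁅X, Z⁆ - hm X ⁅Y, Z⁆) :
    (∀ X Y : L, D X (J Y) = J (D X Y)) ↔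
    ((∀ (X : ↥M) (Y Z : ↥P),
        h (prP ⁅(X : L), (Y : L)⁆) (Z : L) - h (Y : L) (prP ⁅(X : L), (Z : L)⁆)
          = 2 * h ((Q.symm (Dm X (Q Y)) : ↥P) : L) (Z : L)) ∧
     (∀ X Y Z : ↥P,
        h (prP ⁅((Q X : ↥M) : L), (Y : L)⁆) (Z : L)
            + h (Y : L) (prP ⁅((Q X : ↥M) : L), (Z : L)⁆)
          = h (prP ⁅((Q Y : ↥M) : L), (X : L)⁆) (Z : L)
            + h (X : L) (prP ⁅((Q Y : ↥M) : L), (Z : L)⁆)) ∧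
     (∀ (X : ↥P) (Y Z : ↥M),
        h (prM ⁅(X : L), (Y : L)⁆) (Z : L) - h (Y : L) (prM ⁅(X : L), (Z : L)⁆)
          = 2 * h ((Q (Dp X (Q.symm Y)) : ↥M) : L) (Z : L)) ∧
     (∀ (X Y : ↥P) (Z : ↥M),
        h (prM ⁅(X : L), ((Q Y : ↥M) : L)⁆) (Z : L)
            + h ((Q Y : ↥M) : L) (prM ⁅(X : L), (Z : L)⁆)
          = h (prM ⁅(Y : L), ((Q X : ↥M) : L)⁆) (Z : L)
            + h ((Q X : ↥M) : L) (prM ⁅(Y : L), (Z : L)⁆))) := by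
  classical
  -- splitting lemmas
  have hPl : ∀ (x : L) (c : ↥P), h x ↑c = h (prP x) ↑c := by
    intro x c
    have z : h (prM x) (c : L) = 0 := h_MP ⟨prM x, hprM x⟩ c
    conv_lhs => rw [← hpr x]
    rw [map_add, LinearMap.add_apply, z, add_zero]
  have hMl : ∀ (x : L) (w : ↥M), h x ↑w = h (prM x) ↑w := by
    intro x w
    have z : h (prP x) (w : L) = 0 := h_PM ⟨prP x, hprP x⟩ w
    conv_lhs => rw [← hpr x]
    rw [map_add, LinearMap.add_apply, z, zero_add]
  have hPr : ∀ (c : ↥P) (x : L), h ↑c x = h ↑c (prP x) := by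
    intro c x
    have z : h (c : L) (prM x) = 0 := h_PM c ⟨prM x, hprM x⟩
    conv_lhs => rw [← hpr x]
    rw [map_add, z, add_zero]
  have hMr : ∀ (w : ↥M) (x : L), h ↑w x = h ↑w (prM x) := by
    intro w x
    have z : h (w : L) (prP x) = 0 := h_MP w ⟨prP x, hprP x⟩
    conv_lhs => rw [← hpr x]
    rw [map_add, z, zero_add]
  have hsplit : ∀ x y : L, h x y = h (prP x) (prP y) + h (prM x) (prM y) := by
    intro x y
    have z1 : h (prP x) (prM y) = 0 := h_PM ⟨prP x, hprP x⟩ ⟨prM y, hprM y⟩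
    have z2 : h (prM x) (prP y) = 0 := h_MP ⟨prM x, hprM x⟩ ⟨prP y, hprP y⟩
    conv_lhs => rw [← hpr x, ← hpr y]
    simp only [map_add, LinearMap.add_apply, z1, z2]
    ring
  have hsymm : ∀ x y : L, h x y = h y x := by
    intro x y
    have e1 : h (prP x) (prP y) = h (prP y) (prP x) := by
      have a1 : h (prP x) (prP y) = hm (Q ⟨prP x, hprP x⟩) (Q ⟨prP y, hprP y⟩) := h_PP ⟨prP x, hprP x⟩ ⟨prP y, hprP y⟩
      have a2 : h (prP y) (prP x) = hm (Q ⟨prP y, hprP y⟩) (Q ⟨prP x, hprP x⟩) := h_PP ⟨prP y, hprP y⟩ ⟨prP x, hprP x⟩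
      rw [a1, a2, hm_symm]
    have e2 : h (prM x) (prM y) = h (prM y) (prM x) := by
      have a1 : h (prM x) (prM y) = hm ⟨prM x, hprM x⟩ ⟨prM y, hprM y⟩ := h_MM ⟨prM x, hprM x⟩ ⟨prM y, hprM y⟩
      have a2 : h (prM y) (prM x) = hm ⟨prM y, hprM y⟩ ⟨prM x, hprM x⟩ := h_MM ⟨prM y, hprM y⟩ ⟨prM x, hprM x⟩
      rw [a1, a2, hm_symm]
    rw [hsplit x y, hsplit y x, e1, e2]
  -- nondegeneracy of h
  have hnd : ∀ x : L, (∀ z : L, h x z = 0) → x = 0 := by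
    intro x hx
    have hM0 : (⟨prM x, hprM x⟩ : ↥M) = 0 := by
      apply hm_nondeg
      intro Y
      have h1 := hx (Y : L)
      rw [hMl x Y] at h1
      have h2 : h (prM x) (Y : L) = hm ⟨prM x, hprM x⟩ Y := h_MM ⟨prM x, hprM x⟩ Y
      rw [h2] at h1
      exact h1
    have hP0 : (⟨prP x, hprP x⟩ : ↥P) = 0 := by
      have hQ : Q ⟨prP x, hprP x⟩ = 0 := by
        apply hm_nondeg
        intro Y
        have h1 := hx ((Q.symm Y : ↥P) : L)
        rw [hPl x (Q.symm Y)] at h1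
        have h2 : h (prP x) ((Q.symm Y : ↥P) : L)
            = hm (Q ⟨prP x, hprP x⟩) (Q (Q.symm Y)) := h_PP ⟨prP x, hprP x⟩ (Q.symm Y)
        rw [h2, Q.apply_symm_apply] at h1
        exact h1
      exact Q.map_eq_zero_iff.mp hQ
    have e1 : prP x = 0 := congrArg Subtype.val hP0
    have e2 : prM x = 0 := congrArg Subtype.val hM0
    rw [← hpr x, e1, e2, add_zero]
  -- decomposition
  have hdec : ∀ x : L, ∃ (a : ↥P) (u : ↥M), x = ↑a + ↑u :=
    fun x => ⟨⟨prP x, hprP x⟩, ⟨prM x, hprM x⟩, (hpr x).symm⟩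
  -- J is h-antisymmetric
  have hJanti : ∀ x y : L, h (J x) y = - h x (J y) := by
    intro x y
    obtain ⟨a, u, rfl⟩ := hdec x
    obtain ⟨b, v, rfl⟩ := hdec y
    simp only [map_add, LinearMap.add_apply, hJP, hJM, map_neg, LinearMap.neg_apply,
      h_PM, h_MP, h_PP, h_MM, Q.apply_symm_apply]
    ring
  set S : L → L → L → ℝ := fun X Y Z =>
    (h ⁅X, J Y⁆ Z - h (J Y) ⁅X, Z⁆ - h X ⁅J Y, Z⁆)
      + (h ⁅X, Y⁆ (J Z) - h Y ⁅X, J Z⁆ - h X ⁅Y, J Z⁆) with hSdef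
  have key : ∀ X Y Z : L, 2 * h (D X (J Y) - J (D X Y)) Z = S X Y Z := by
    intro X Y Z
    have k1 := hKoszul X (J Y) Z
    have k2 := hKoszul X Y (J Z)
    have ja : h (J (D X Y)) Z = - h (D X Y) (J Z) := hJanti _ _
    have ex : h (D X (J Y) - J (D X Y)) Z = h (D X (J Y)) Z - h (J (D X Y)) Z := by
      rw [map_sub, LinearMap.sub_apply]
    rw [ex]
    simp only [hSdef]
    linarith
  have equiv0 : (∀ X Y : L, D X (J Y) = J (D X Y)) ↔ ∀ X Y Z : L, S X Y Z = 0 := by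
    constructor
    · intro H X Y Z
      have k := key X Y Z
      rw [H X Y, sub_self] at k
      simpa using k.symm
    · intro H X Y
      have hz : D X (J Y) - J (D X Y) = 0 := by
        apply hnd
        intro z
        have k := key X Y z
        rw [H X Y z] at k
        linarith
      exact sub_eq_zero.mp hz
  -- additivity of S in each slot
  have Sadd1 : ∀ x x' y z : L, S (x + x') y z = S x y z + S x' y z := by
    intro x x' y z
    simp only [hSdef, add_lie, lie_add, map_add, LinearMap.add_apply]
    ring
  have Sadd2 : ∀ x y y' z : L, S x (y + y') z = S x y z + S x y' z := by
    intro x y y' z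
    simp only [hSdef, add_lie, lie_add, map_add, LinearMap.add_apply]
    ring
  have Sadd3 : ∀ x y z z' : L, S x y (z + z') = S x y z + S x y z' := by
    intro x y z z'
    simp only [hSdef, add_lie, lie_add, map_add, LinearMap.add_apply]
    ring
  -- case lemmas
  have casePPP : ∀ a b c : ↥P, S ↑a ↑b ↑c =
      (h (prP ⁅((Q c : ↥M) : L), (b : L)⁆) (a : L) + h (b : L) (prP ⁅((Q c : ↥M) : L), (a : L)⁆))
      - (h (prP ⁅((Q b : ↥M) : L), (c : L)⁆) (a : L) + h (c : L) (prP ⁅((Q b : ↥M) : L), (a : L)⁆)) := by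
    intro a b c
    simp only [hSdef, hJP]
    have e1 : h ⁅(a : L), ((Q b : ↥M) : L)⁆ (c : L)
        = - h (prP ⁅((Q b : ↥M) : L), (a : L)⁆) (c : L) := by
      rw [← lie_skew ((Q b : ↥M) : L) (a : L)]
      simp only [map_neg, LinearMap.neg_apply]
      rw [hPl _ c]
      ring
    have e2 : h ((Q b : ↥M) : L) ⁅(a : L), (c : L)⁆ = 0 := h_MP (Q b) ⁅a, c⁆
    have e3 : h (a : L) ⁅((Q b : ↥M) : L), (c : L)⁆
        = h (a : L) (prP ⁅((Q b : ↥M) : L), (c : L)⁆) := hPr a _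
    have e4 : h ⁅(a : L), (b : L)⁆ ((Q c : ↥M) : L) = 0 := h_PM ⁅a, b⁆ (Q c)
    have e5 : h (b : L) ⁅(a : L), ((Q c : ↥M) : L)⁆
        = - h (b : L) (prP ⁅((Q c : ↥M) : L), (a : L)⁆) := by
      rw [← lie_skew ((Q c : ↥M) : L) (a : L)]
      simp only [map_neg, LinearMap.neg_apply]
      rw [hPr b]
      ring
    have e6 : h (a : L) ⁅(b : L), ((Q c : ↥M) : L)⁆
        = - h (a : L) (prP ⁅((Q c : ↥M) : L), (b : L)⁆) := by
      rw [← lie_skew ((Q c : ↥M) : L) (b : L)]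
      simp only [map_neg, LinearMap.neg_apply]
      rw [hPr a]
      ring
    have s1 : h (prP ⁅((Q c : ↥M) : L), (b : L)⁆) (a : L)
        = h (a : L) (prP ⁅((Q c : ↥M) : L), (b : L)⁆) := hsymm _ _
    have s2 : h (prP ⁅((Q b : ↥M) : L), (c : L)⁆) (a : L)
        = h (a : L) (prP ⁅((Q b : ↥M) : L), (c : L)⁆) := hsymm _ _
    have s3 : h (c : L) (prP ⁅((Q b : ↥M) : L), (a : L)⁆)
        = h (prP ⁅((Q b : ↥M) : L), (a : L)⁆) (c : L) := hsymm _ _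
    linarith
  have casePPM : ∀ (a b : ↥P) (w : ↥M), S ↑a ↑b ↑w =
      (h (prM ⁅(a : L), ((Q b : ↥M) : L)⁆) (w : L)
        - h ((Q b : ↥M) : L) (prM ⁅(a : L), (w : L)⁆))
      - 2 * h ((Q (Dp a b) : ↥M) : L) (w : L) := by
    intro a b w
    simp only [hSdef, hJP, hJM, lie_neg, neg_lie, map_neg, LinearMap.neg_apply, neg_neg]
    have f1 : h (a : L) ⁅((Q b : ↥M) : L), (w : L)⁆ = 0 := h_PM a ⁅Q b, w⁆
    have f2 : h ⁅(a : L), ((Q b : ↥M) : L)⁆ (w : L)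
        = h (prM ⁅(a : L), ((Q b : ↥M) : L)⁆) (w : L) := hMl _ w
    have f3 : h ((Q b : ↥M) : L) ⁅(a : L), (w : L)⁆
        = h ((Q b : ↥M) : L) (prM ⁅(a : L), (w : L)⁆) := hMr (Q b) _
    have kos : 2 * h ((Dp a b : ↥P) : L) ((Q.symm w : ↥P) : L)
        = h ⁅(a : L), (b : L)⁆ ((Q.symm w : ↥P) : L)
          - h (b : L) ⁅(a : L), ((Q.symm w : ↥P) : L)⁆
          - h (a : L) ⁅(b : L), ((Q.symm w : ↥P) : L)⁆ := hKp a b (Q.symm w)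
    have conv1 : h ((Q (Dp a b) : ↥M) : L) (w : L)
        = h ((Dp a b : ↥P) : L) ((Q.symm w : ↥P) : L) := by
      rw [h_MM, h_PP, Q.apply_symm_apply]
    linarith
  have casePMP : ∀ (a : ↥P) (v : ↥M) (c : ↥P), S ↑a ↑v ↑c =
      (h (prM ⁅(a : L), (v : L)⁆) ((Q c : ↥M) : L)
        - h (v : L) (prM ⁅(a : L), ((Q c : ↥M) : L)⁆))
      - 2 * h ((Q (Dp a (Q.symm v)) : ↥M) : L) ((Q c : ↥M) : L) := by
    intro a v c
    simp only [hSdef, hJP, hJM, lie_neg, neg_lie, map_neg, LinearMap.neg_apply, neg_neg]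
    have g4 : h ⁅(a : L), (v : L)⁆ ((Q c : ↥M) : L)
        = h (prM ⁅(a : L), (v : L)⁆) ((Q c : ↥M) : L) := hMl _ (Q c)
    have g5 : h (v : L) ⁅(a : L), ((Q c : ↥M) : L)⁆
        = h (v : L) (prM ⁅(a : L), ((Q c : ↥M) : L)⁆) := hMr v _
    have g6 : h (a : L) ⁅(v : L), ((Q c : ↥M) : L)⁆ = 0 := h_PM a ⁅v, Q c⁆
    have kos : 2 * h ((Dp a (Q.symm v) : ↥P) : L) (c : L)
        = h ⁅(a : L), ((Q.symm v : ↥P) : L)⁆ (c : L)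
          - h ((Q.symm v : ↥P) : L) ⁅(a : L), (c : L)⁆
          - h (a : L) ⁅((Q.symm v : ↥P) : L), (c : L)⁆ := hKp a (Q.symm v) c
    have conv1 : h ((Q (Dp a (Q.symm v)) : ↥M) : L) ((Q c : ↥M) : L)
        = h ((Dp a (Q.symm v) : ↥P) : L) (c : L) := by
      rw [h_MM, h_PP]
    linarith
  have casePMM : ∀ (a : ↥P) (v w : ↥M), S ↑a ↑v ↑w =
      (h (prP ⁅(v : L), ((Q.symm w : ↥P) : L)⁆) (a : L)
        + h ((Q.symm w : ↥P) : L) (prP ⁅(v : L), (a : L)⁆))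
      - (h (prP ⁅(w : L), ((Q.symm v : ↥P) : L)⁆) (a : L)
        + h ((Q.symm v : ↥P) : L) (prP ⁅(w : L), (a : L)⁆)) := by
    intro a v w
    simp only [hSdef, hJP, hJM, lie_neg, neg_lie, map_neg, LinearMap.neg_apply, neg_neg]
    have p1 : h ⁅(a : L), ((Q.symm v : ↥P) : L)⁆ (w : L) = 0 := h_PM ⁅a, Q.symm v⁆ w
    have p2 : h ((Q.symm v : ↥P) : L) ⁅(a : L), (w : L)⁆
        = - h ((Q.symm v : ↥P) : L) (prP ⁅(w : L), (a : L)⁆) := by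
      rw [← lie_skew (w : L) (a : L)]
      simp only [map_neg, LinearMap.neg_apply]
      rw [hPr (Q.symm v)]
      ring
    have p3 : h (a : L) ⁅((Q.symm v : ↥P) : L), (w : L)⁆
        = - h (a : L) (prP ⁅(w : L), ((Q.symm v : ↥P) : L)⁆) := by
      rw [← lie_skew (w : L) ((Q.symm v : ↥P) : L)]
      simp only [map_neg, LinearMap.neg_apply]
      rw [hPr a]
      ring
    have p4 : h ⁅(a : L), (v : L)⁆ ((Q.symm w : ↥P) : L)
        = - h (prP ⁅(v : L), (a : L)⁆) ((Q.symm w : ↥P) : L) := by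
      rw [← lie_skew (v : L) (a : L)]
      simp only [map_neg, LinearMap.neg_apply]
      rw [hPl _ (Q.symm w)]
      ring
    have p5 : h (v : L) ⁅(a : L), ((Q.symm w : ↥P) : L)⁆ = 0 := h_MP v ⁅a, Q.symm w⁆
    have p6 : h (a : L) ⁅(v : L), ((Q.symm w : ↥P) : L)⁆
        = h (a : L) (prP ⁅(v : L), ((Q.symm w : ↥P) : L)⁆) := hPr a _
    have s1 : h (prP ⁅(w : L), ((Q.symm v : ↥P) : L)⁆) (a : L)
        = h (a : L) (prP ⁅(w : L), ((Q.symm v : ↥P) : L)⁆) := hsymm _ _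
    have s2 : h ((Q.symm w : ↥P) : L) (prP ⁅(v : L), (a : L)⁆)
        = h (prP ⁅(v : L), (a : L)⁆) ((Q.symm w : ↥P) : L) := hsymm _ _
    have s3 : h (prP ⁅(v : L), ((Q.symm w : ↥P) : L)⁆) (a : L)
        = h (a : L) (prP ⁅(v : L), ((Q.symm w : ↥P) : L)⁆) := hsymm _ _
    linarith
  have caseMPP : ∀ (u : ↥M) (b c : ↥P), S ↑u ↑b ↑c =
      (h (prM ⁅(c : L), ((Q b : ↥M) : L)⁆) (u : L)
        + h ((Q b : ↥M) : L) (prM ⁅(c : L), (u : L)⁆))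
      - (h (prM ⁅(b : L), ((Q c : ↥M) : L)⁆) (u : L)
        + h ((Q c : ↥M) : L) (prM ⁅(b : L), (u : L)⁆)) := by
    intro u b c
    simp only [hSdef, hJP]
    have q1 : h ⁅(u : L), ((Q b : ↥M) : L)⁆ (c : L) = 0 := h_MP ⁅u, Q b⁆ c
    have q2 : h ((Q b : ↥M) : L) ⁅(u : L), (c : L)⁆
        = - h ((Q b : ↥M) : L) (prM ⁅(c : L), (u : L)⁆) := by
      rw [← lie_skew (c : L) (u : L)]
      simp only [map_neg, LinearMap.neg_apply]
      rw [hMr (Q b)]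
      ring
    have q3 : h (u : L) ⁅((Q b : ↥M) : L), (c : L)⁆
        = - h (u : L) (prM ⁅(c : L), ((Q b : ↥M) : L)⁆) := by
      rw [← lie_skew (c : L) ((Q b : ↥M) : L)]
      simp only [map_neg, LinearMap.neg_apply]
      rw [hMr u]
      ring
    have q4 : h ⁅(u : L), (b : L)⁆ ((Q c : ↥M) : L)
        = - h (prM ⁅(b : L), (u : L)⁆) ((Q c : ↥M) : L) := by
      rw [← lie_skew (b : L) (u : L)]
      simp only [map_neg, LinearMap.neg_apply]
      rw [hMl _ (Q c)]
      ring
    have q5 : h (b : L) ⁅(u : L), ((Q c : ↥M) : L)⁆ = 0 := h_PM b ⁅u, Q c⁆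
    have q6 : h (u : L) ⁅(b : L), ((Q c : ↥M) : L)⁆
        = h (u : L) (prM ⁅(b : L), ((Q c : ↥M) : L)⁆) := hMr u _
    have s1 : h (prM ⁅(c : L), ((Q b : ↥M) : L)⁆) (u : L)
        = h (u : L) (prM ⁅(c : L), ((Q b : ↥M) : L)⁆) := hsymm _ _
    have s2 : h (prM ⁅(b : L), (u : L)⁆) ((Q c : ↥M) : L)
        = h ((Q c : ↥M) : L) (prM ⁅(b : L), (u : L)⁆) := hsymm _ _
    have s3 : h (prM ⁅(b : L), ((Q c : ↥M) : L)⁆) (u : L)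
        = h (u : L) (prM ⁅(b : L), ((Q c : ↥M) : L)⁆) := hsymm _ _
    linarith
  have caseMPM : ∀ (u : ↥M) (b c : ↥P), S ↑u ↑b ↑(Q c) =
      2 * h ((Q.symm (Dm u (Q b)) : ↥P) : L) (c : L)
      - (h (prP ⁅(u : L), (b : L)⁆) (c : L) - h (b : L) (prP ⁅(u : L), (c : L)⁆)) := by
    intro u b c
    simp only [hSdef, hJP, hJM, Q.symm_apply_apply, lie_neg, neg_lie, map_neg,
      LinearMap.neg_apply, neg_neg]
    have r1 : h ⁅(u : L), ((Q b : ↥M) : L)⁆ ((Q c : ↥M) : L) = hm ⁅u, Q b⁆ (Q c) :=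
      h_MM ⁅u, Q b⁆ (Q c)
    have r2 : h ((Q b : ↥M) : L) ⁅(u : L), ((Q c : ↥M) : L)⁆ = hm (Q b) ⁅u, Q c⁆ :=
      h_MM (Q b) ⁅u, Q c⁆
    have r3 : h (u : L) ⁅((Q b : ↥M) : L), ((Q c : ↥M) : L)⁆ = hm u ⁅Q b, Q c⁆ :=
      h_MM u ⁅Q b, Q c⁆
    have r4 : h ⁅(u : L), (b : L)⁆ (c : L) = h (prP ⁅(u : L), (b : L)⁆) (c : L) := hPl _ c
    have r5 : h (b : L) ⁅(u : L), (c : L)⁆ = h (b : L) (prP ⁅(u : L), (c : L)⁆) := hPr b _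
    have r6 : h (u : L) ⁅(b : L), (c : L)⁆ = 0 := h_MP u ⁅b, c⁆
    have kos := hKm u (Q b) (Q c)
    have conv1 : h ((Q.symm (Dm u (Q b)) : ↥P) : L) (c : L) = hm (Dm u (Q b)) (Q c) := by
      rw [h_PP, Q.apply_symm_apply]
    linarith
  have caseMMP : ∀ (u v : ↥M) (c : ↥P), S ↑u ↑v ↑c =
      2 * h ((Q.symm (Dm u v) : ↥P) : L) (c : L)
      - (h (prP ⁅(u : L), ((Q.symm v : ↥P) : L)⁆) (c : L)
        - h ((Q.symm v : ↥P) : L) (prP ⁅(u : L), (c : L)⁆)) := by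
    intro u v c
    simp only [hSdef, hJP, hJM, lie_neg, neg_lie, map_neg, LinearMap.neg_apply, neg_neg]
    have m1 : h ⁅(u : L), ((Q.symm v : ↥P) : L)⁆ (c : L)
        = h (prP ⁅(u : L), ((Q.symm v : ↥P) : L)⁆) (c : L) := hPl _ c
    have m2 : h ((Q.symm v : ↥P) : L) ⁅(u : L), (c : L)⁆
        = h ((Q.symm v : ↥P) : L) (prP ⁅(u : L), (c : L)⁆) := hPr (Q.symm v) _
    have m3 : h (u : L) ⁅((Q.symm v : ↥P) : L), (c : L)⁆ = 0 := h_MP u ⁅Q.symm v, c⁆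
    have m4 : h ⁅(u : L), (v : L)⁆ ((Q c : ↥M) : L) = hm ⁅u, v⁆ (Q c) := h_MM ⁅u, v⁆ (Q c)
    have m5 : h (v : L) ⁅(u : L), ((Q c : ↥M) : L)⁆ = hm v ⁅u, Q c⁆ := h_MM v ⁅u, Q c⁆
    have m6 : h (u : L) ⁅(v : L), ((Q c : ↥M) : L)⁆ = hm u ⁅v, Q c⁆ := h_MM u ⁅v, Q c⁆
    have kos := hKm u v (Q c)
    have conv1 : h ((Q.symm (Dm u v) : ↥P) : L) (c : L) = hm (Dm u v) (Q c) := by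
      rw [h_PP, Q.apply_symm_apply]
    linarith
  have caseMMM : ∀ (u v w : ↥M), S ↑u ↑v ↑w =
      (h (prM ⁅((Q.symm v : ↥P) : L), (w : L)⁆) (u : L)
        + h (w : L) (prM ⁅((Q.symm v : ↥P) : L), (u : L)⁆))
      - (h (prM ⁅((Q.symm w : ↥P) : L), (v : L)⁆) (u : L)
        + h (v : L) (prM ⁅((Q.symm w : ↥P) : L), (u : L)⁆)) := by
    intro u v w
    simp only [hSdef, hJP, hJM, lie_neg, neg_lie, map_neg, LinearMap.neg_apply, neg_neg]
    have n1 : h ⁅(u : L), ((Q.symm v : ↥P) : L)⁆ (w : L)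
        = - h (prM ⁅((Q.symm v : ↥P) : L), (u : L)⁆) (w : L) := by
      rw [← lie_skew ((Q.symm v : ↥P) : L) (u : L)]
      simp only [map_neg, LinearMap.neg_apply]
      rw [hMl _ w]
      ring
    have n2 : h ((Q.symm v : ↥P) : L) ⁅(u : L), (w : L)⁆ = 0 := h_PM (Q.symm v) ⁅u, w⁆
    have n3 : h (u : L) ⁅((Q.symm v : ↥P) : L), (w : L)⁆
        = h (u : L) (prM ⁅((Q.symm v : ↥P) : L), (w : L)⁆) := hMr u _
    have n4 : h ⁅(u : L), (v : L)⁆ ((Q.symm w : ↥P) : L) = 0 := h_MP ⁅u, v⁆ (Q.symm w)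
    have n5 : h (v : L) ⁅(u : L), ((Q.symm w : ↥P) : L)⁆
        = - h (v : L) (prM ⁅((Q.symm w : ↥P) : L), (u : L)⁆) := by
      rw [← lie_skew ((Q.symm w : ↥P) : L) (u : L)]
      simp only [map_neg, LinearMap.neg_apply]
      rw [hMr v]
      ring
    have n6 : h (u : L) ⁅(v : L), ((Q.symm w : ↥P) : L)⁆
        = - h (u : L) (prM ⁅((Q.symm w : ↥P) : L), (v : L)⁆) := by
      rw [← lie_skew ((Q.symm w : ↥P) : L) (v : L)]
      simp only [map_neg, LinearMap.neg_apply]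
      rw [hMr u]
      ring
    have s1 : h (prM ⁅((Q.symm v : ↥P) : L), (u : L)⁆) (w : L)
        = h (w : L) (prM ⁅((Q.symm v : ↥P) : L), (u : L)⁆) := hsymm _ _
    have s2 : h (prM ⁅((Q.symm v : ↥P) : L), (w : L)⁆) (u : L)
        = h (u : L) (prM ⁅((Q.symm v : ↥P) : L), (w : L)⁆) := hsymm _ _
    have s3 : h (prM ⁅((Q.symm w : ↥P) : L), (v : L)⁆) (u : L)
        = h (u : L) (prM ⁅((Q.symm w : ↥P) : L), (v : L)⁆) := hsymm _ _
    linarith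
  -- main equivalence
  rw [equiv0]
  constructor
  · intro HS
    refine ⟨?_, ?_, ?_, ?_⟩
    · intro u b c
      have e := caseMPM u b c
      have hz := HS ↑u ↑b ↑(Q c)
      linarith
    · intro X Y Z
      have e := casePPP Z X Y
      have hz := HS ↑Z ↑X ↑Y
      linarith
    · intro X Ym Z
      have e := casePPM X (Q.symm Ym) Z
      rw [Q.apply_symm_apply] at e
      have hz := HS ↑X ↑(Q.symm Ym) ↑Z
      linarith
    · intro X Y Zm
      have e := caseMPP Zm X Y
      have hz := HS ↑Zm ↑X ↑Y
      linarith
  · rintro ⟨H1, H2, H3, H4⟩ X Y Z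
    obtain ⟨a, u, rfl⟩ := hdec X
    obtain ⟨b, v, rfl⟩ := hdec Y
    obtain ⟨c, w, rfl⟩ := hdec Z
    have z1 : S ↑a ↑b ↑c = 0 := by
      have e := casePPP a b c
      have := H2 b c a
      linarith
    have z2 : S ↑a ↑b ↑w = 0 := by
      have e := casePPM a b w
      have := H3 a (Q b) w
      rw [Q.symm_apply_apply] at this
      linarith
    have z3 : S ↑a ↑v ↑c = 0 := by
      have e := casePMP a v c
      have := H3 a v (Q c)
      linarith
    have z4 : S ↑a ↑v ↑w = 0 := by
      have e := casePMM a v w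
      have := H2 (Q.symm v) (Q.symm w) a
      rw [Q.apply_symm_apply, Q.apply_symm_apply] at this
      linarith
    have z5 : S ↑u ↑b ↑c = 0 := by
      have e := caseMPP u b c
      have := H4 b c u
      linarith
    have z6 : S ↑u ↑b ↑w = 0 := by
      have e := caseMPM u b (Q.symm w)
      rw [Q.apply_symm_apply] at e
      have := H1 u b (Q.symm w)
      linarith
    have z7 : S ↑u ↑v ↑c = 0 := by
      have e := caseMMP u v c
      have := H1 u (Q.symm v) c
      rw [Q.apply_symm_apply] at this
      linarith
    have z8 : S ↑u ↑v ↑w = 0 := by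
      have e := caseMMM u v w
      have := H4 (Q.symm v) (Q.symm w) u
      rw [Q.apply_symm_apply, Q.apply_symm_apply] at this
      linarith
    rw [Sadd1, Sadd2, Sadd2, Sadd3, Sadd3, Sadd3, Sadd3, z1, z2, z3, z4, z5, z6, z7, z8]
    norm_num
end

section
/- Let 𝔤 be a finite-dimensional real Lie algebra which is the vector space direct sum of a Lie ideal 𝔤₊ and a Lie subalgebra 𝔤₋ (so [X₊,X₋] ∈ 𝔤₊ for X₊ ∈ 𝔤₊, X₋ ∈ 𝔤₋). Let h₋ be a nondegenerate symmetric bilinear form on 𝔤₋, Q : 𝔤₊ → 𝔤₋ a linear isomorphism, h₊(X,Y) := h₋(QX,QY), and let h be the form on 𝔤 restricting to h₊ on 𝔤₊, to h₋ on 𝔤₋, with h(𝔤₊,𝔤₋) = 0. Let J(X₊) = QX₊, J(X₋) = −Q⁻¹X₋, define φ(X₋)Y₊ := [X₋,Y₊] ∈ 𝔤₊, and let ∇, ∇⁻ be the Levi-Civita connections of h and h₋. Then ∇_X(JY) = J(∇_X Y) for all X, Y ∈ 𝔤 if and only if: (1) 𝔤₊ is abelian; (2) φ(X₋)ᵃ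 Y₊ = Q⁻¹(∇⁻_{X₋}(QY₊)) for all X₋ ∈ 𝔤₋, Y₊ ∈ 𝔤₊ (antisymmetric part with respect to h₊); (3) φ(QX₊)ˢ Y₊ = φ(QY₊)ˢ X₊ for all X₊, Y₊ ∈ 𝔤₊. -/
/-- Koszul trilinear expression. -/
private def kosz {L : Type*} [LieRing L] [LieAlgebra ℝ L]
    (h : L →ₗ[ℝ] L →ₗ[ℝ] ℝ) (X Y Z : L) : ℝ :=
  h ⁅X, Y⁆ Z - h Y ⁅X, Z⁆ - h X ⁅Y, Z⁆

private lemma kosz_def {L : Type*} [LieRing L] [LieAlgebra ℝ L]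
    (h : L →ₗ[ℝ] L →ₗ[ℝ] ℝ) (X Y Z : L) :
    kosz h X Y Z = h ⁅X, Y⁆ Z - h Y ⁅X, Z⁆ - h X ⁅Y, Z⁆ := rfl

private lemma kosz_add1 {L : Type*} [LieRing L] [LieAlgebra ℝ L]
    (h : L →ₗ[ℝ] L →ₗ[ℝ] ℝ) (x x' y z : L) :
    kosz h (x + x') y z = kosz h x y z + kosz h x' y z := by
  simp only [kosz, add_lie, lie_add, map_add, LinearMap.add_apply]; ring

private lemma kosz_add2 {L : Type*} [LieRing L] [LieAlgebra ℝ L]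
    (h : L →ₗ[ℝ] L →ₗ[ℝ] ℝ) (x y y' z : L) :
    kosz h x (y + y') z = kosz h x y z + kosz h x y' z := by
  simp only [kosz, add_lie, lie_add, map_add, LinearMap.add_apply]; ring

private lemma kosz_add3 {L : Type*} [LieRing L] [LieAlgebra ℝ L]
    (h : L →ₗ[ℝ] L →ₗ[ℝ] ℝ) (x y z z' : L) :
    kosz h x y (z + z') = kosz h x y z + kosz h x y z' := by
  simp only [kosz, add_lie, lie_add, map_add, LinearMap.add_apply]; ring

private lemma kosz_neg2 {L : Type*} [LieRing L] [LieAlgebra ℝ L]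
    (h : L →ₗ[ℝ] L →ₗ[ℝ] ℝ) (x y z : L) :
    kosz h x (-y) z = -kosz h x y z := by
  simp only [kosz, neg_lie, lie_neg, map_neg, LinearMap.neg_apply]; ring

private lemma kosz_neg3 {L : Type*} [LieRing L] [LieAlgebra ℝ L]
    (h : L →ₗ[ℝ] L →ₗ[ℝ] ℝ) (x y z : L) :
    kosz h x y (-z) = -kosz h x y z := by
  simp only [kosz, neg_lie, lie_neg, map_neg, LinearMap.neg_apply]; ring

/-- Integrability criterion for the Born structure associated with semidirect product
data `(𝔤₊, 𝔤₋, h₋, Q, φ)`, where `𝔤₊` is an ideal and `φ(X₋)Y₊ = [X₋,Y₊]`. -/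
theorem semidirect_born_integrability
    (L : Type*) [LieRing L] [LieAlgebra ℝ L] [FiniteDimensional ℝ L]
    (P M : LieSubalgebra ℝ L)
    (hcompl : IsCompl P.toSubmodule M.toSubmodule)
    (hideal : ∀ (X : L) (Y : ↥P), ⁅X, (Y : L)⁆ ∈ P)
    (hm : (↥M) →ₗ[ℝ] (↥M) →ₗ[ℝ] ℝ)
    (hm_symm : ∀ X Y, hm X Y = hm Y X)
    (hm_nondeg : ∀ X, (∀ Y, hm X Y = 0) → X = 0)
    (Q : (↥P) ≃ₗ[ℝ] (↥M))
    (h : L →ₗ[ℝ] L →ₗ[ℝ] ℝ)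
    (h_PP : ∀ X Y : ↥P, h (X : L) (Y : L) = hm (Q X) (Q Y))
    (h_MM : ∀ X Y : ↥M, h (X : L) (Y : L) = hm X Y)
    (h_PM : ∀ (X : ↥P) (Y : ↥M), h (X : L) (Y : L) = 0)
    (h_MP : ∀ (X : ↥M) (Y : ↥P), h (X : L) (Y : L) = 0)
    (J : L →ₗ[ℝ] L)
    (hJP : ∀ X : ↥P, J (X : L) = ((Q X : ↥M) : L))
    (hJM : ∀ X : ↥M, J (X : L) = -((Q.symm X : ↥P) : L))
    (D : L →ₗ[ℝ] L →ₗ[ℝ] L)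
    (hKoszul : ∀ X Y Z : L, 2 * h (D X Y) Z = h ⁅X, Y⁆ Z - h Y ⁅X, Z⁆ - h X ⁅Y, Z⁆)
    (Dm : (↥M) →ₗ[ℝ] (↥M) →ₗ[ℝ] (↥M))
    (hKm : ∀ X Y Z : ↥M, 2 * hm (Dm X Y) Z = hm ⁅X, Y⁆ Z - hm Y ⁅X, Z⁆ - hm X ⁅Y, Z⁆) :
    (∀ X Y : L, D X (J Y) = J (D X Y)) ↔
    ((∀ X Y : ↥P, ⁅(X : L), (Y : L)⁆ = 0) ∧
     (∀ (X : ↥M) (Y Z : ↥P),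
        h ⁅(X : L), (Y : L)⁆ (Z : L) - h (Y : L) ⁅(X : L), (Z : L)⁆
          = 2 * h ((Q.symm (Dm X (Q Y)) : ↥P) : L) (Z : L)) ∧
     (∀ X Y Z : ↥P,
        h ⁅((Q X : ↥M) : L), (Y : L)⁆ (Z : L) + h (Y : L) ⁅((Q X : ↥M) : L), (Z : L)⁆
          = h ⁅((Q Y : ↥M) : L), (X : L)⁆ (Z : L)
            + h (X : L) ⁅((Q Y : ↥M) : L), (Z : L)⁆)) := by
  classical
  -- decomposition
  have hdec : ∀ x : L, ∃ (A : ↥P) (a : ↥M), x = (A : L) + (a : L) := by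
    intro x
    obtain ⟨u, v, huv, -⟩ := Submodule.existsUnique_add_of_isCompl hcompl x
    exact ⟨⟨u.1, (LieSubalgebra.mem_toSubmodule P).1 u.2⟩,
           ⟨v.1, (LieSubalgebra.mem_toSubmodule M).1 v.2⟩, huv.symm⟩
  -- orthogonality on L
  have hPM0 : ∀ {v w : L}, v ∈ P → w ∈ M → h v w = 0 := fun hv hw => h_PM ⟨_, hv⟩ ⟨_, hw⟩
  have hMP0 : ∀ {v w : L}, v ∈ M → w ∈ P → h v w = 0 := fun hv hw => h_MP ⟨_, hv⟩ ⟨_, hw⟩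
  -- bracket memberships
  have brP : ∀ (v w : L), w ∈ P → ⁅v, w⁆ ∈ P := fun v w hw => hideal v ⟨w, hw⟩
  have brP' : ∀ (v w : L), v ∈ P → ⁅v, w⁆ ∈ P := by
    intro v w hv
    have h1 : ⁅w, v⁆ ∈ P := brP w v hv
    have h2 : -⁅w, v⁆ ∈ P := P.toSubmodule.neg_mem h1
    rwa [lie_skew] at h2
  have brM : ∀ (v w : L), v ∈ M → w ∈ M → ⁅v, w⁆ ∈ M := fun v w hv hw => M.lie_mem hv hw
  -- symmetry of h
  have hsymm : ∀ v w : L, h v w = h w v := by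
    intro v w
    obtain ⟨A, a, rfl⟩ := hdec v
    obtain ⟨B, b, rfl⟩ := hdec w
    simp only [map_add, LinearMap.add_apply]
    have f1 := h_PP A B
    have f2 := h_PP B A
    have f3 := h_MM a b
    have f4 := h_MM b a
    have f5 := h_PM A b
    have f6 := h_PM B a
    have f7 := h_MP a B
    have f8 := h_MP b A
    have g1 := hm_symm (Q A) (Q B)
    have g2 := hm_symm a b
    linarith
  -- nondegeneracy of h against P, for elements of P
  have hPnd : ∀ v : L, v ∈ P → (∀ w : ↥P, h v (w : L) = 0) → v = 0 := by
    intro v hv hz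
    have : Q ⟨v, hv⟩ = 0 := by
      apply hm_nondeg
      intro y
      have := hz (Q.symm y)
      rw [show v = ((⟨v, hv⟩ : ↥P) : L) from rfl, h_PP, Q.apply_symm_apply] at this
      exact this
    have : (⟨v, hv⟩ : ↥P) = 0 := by
      simpa using congrArg Q.symm this
    exact congrArg (fun t : ↥P => (t : L)) this
  -- nondegeneracy of h on L
  have hnd : ∀ v : L, (∀ w : L, h v w = 0) → v = 0 := by
    intro v hz
    obtain ⟨A, a, rfl⟩ := hdec v
    have hA : (A : L) = 0 := by
      apply hPnd _ A.2
      intro w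
      have := hz w
      rw [map_add, LinearMap.add_apply, hMP0 a.2 w.2] at this
      linarith
    have ha : a = 0 := by
      apply hm_nondeg
      intro y
      have := hz (y : L)
      rw [map_add, LinearMap.add_apply, hPM0 A.2 y.2, h_MM] at this
      linarith
    rw [hA, ha]; simp
  -- J is h-antisymmetric
  have hJanti : ∀ v w : L, h (J v) w = -h v (J w) := by
    intro v w
    obtain ⟨A, a, rfl⟩ := hdec v
    obtain ⟨B, b, rfl⟩ := hdec w
    have f1 : h ((Q A : ↥M) : L) (B : L) = 0 := h_MP _ _
    have f2 : h ((Q A : ↥M) : L) (b : L) = hm (Q A) b := h_MM _ _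
    have f3 : h ((Q.symm a : ↥P) : L) (B : L) = hm a (Q B) := by
      rw [h_PP, Q.apply_symm_apply]
    have f4 : h ((Q.symm a : ↥P) : L) (b : L) = 0 := h_PM _ _
    have f5 : h (A : L) ((Q B : ↥M) : L) = 0 := h_PM _ _
    have f6 : h (A : L) ((Q.symm b : ↥P) : L) = hm (Q A) b := by
      rw [h_PP, Q.apply_symm_apply]
    have f7 : h (a : L) ((Q B : ↥M) : L) = hm a (Q B) := h_MM _ _
    have f8 : h (a : L) ((Q.symm b : ↥P) : L) = 0 := h_MP _ _
    simp only [map_add, LinearMap.add_apply, hJP, hJM, map_neg, LinearMap.neg_apply]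
    linarith
  -- skew-symmetry helpers
  have hskewl : ∀ u v w : L, h ⁅u, v⁆ w = -h ⁅v, u⁆ w := by
    intro u v w
    have e : ⁅u, v⁆ = -⁅v, u⁆ := by rw [lie_skew]
    rw [e, map_neg, LinearMap.neg_apply]
  have hskewr : ∀ u v w : L, h u ⁅v, w⁆ = -h u ⁅w, v⁆ := by
    intro u v w
    have e : ⁅v, w⁆ = -⁅w, v⁆ := by rw [lie_skew]
    rw [e, map_neg]
  -- reformulation via the Koszul trilinear expression
  have keyiff : (∀ X Y : L, D X (J Y) = J (D X Y)) ↔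
      (∀ X Y Z : L, kosz h X (J Y) Z + kosz h X Y (J Z) = 0) := by
    constructor
    · intro hC X Y Z
      have k1 := hKoszul X (J Y) Z
      have k2 := hKoszul X Y (J Z)
      have e : h (D X (J Y)) Z = h (J (D X Y)) Z := by rw [hC X Y]
      have ja := hJanti (D X Y) Z
      simp only [kosz_def]
      linarith
    · intro hk X Y
      have hzero : ∀ Z : L, h (D X (J Y) - J (D X Y)) Z = 0 := by
        intro Z
        have k1 := hKoszul X (J Y) Z
        have k2 := hKoszul X Y (J Z)
        have ja := hJanti (D X Y) Z
        have hz := hk X Y Z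
        simp only [kosz_def] at hz
        rw [map_sub, LinearMap.sub_apply]
        linarith
      exact sub_eq_zero.mp (hnd _ hzero)
  rw [keyiff]
  constructor
  · -- forward direction
    intro hk
    refine ⟨?_, ?_, ?_⟩
    · -- P is abelian
      intro A B
      have habr : ∀ G : ↥P, h ⁅(A : L), (B : L)⁆ (G : L) = 0 := by
        intro G
        have k1 := hk (A : L) (B : L) ((Q G : ↥M) : L)
        have k2 := hk (B : L) (A : L) ((Q G : ↥M) : L)
        rw [hJP, hJM, Q.symm_apply_apply, kosz_neg3] at k1
        rw [hJP, hJM, Q.symm_apply_apply, kosz_neg3] at k2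
        have z1 : kosz h (A : L) ((Q B : ↥M) : L) ((Q G : ↥M) : L) = 0 := by
          rw [kosz_def, hPM0 (brP' _ _ A.2) (Q G).2, hMP0 (Q B).2 (brP' _ _ A.2),
              hPM0 A.2 (brM _ _ (Q B).2 (Q G).2)]
          ring
        have z2 : kosz h (B : L) ((Q A : ↥M) : L) ((Q G : ↥M) : L) = 0 := by
          rw [kosz_def, hPM0 (brP' _ _ B.2) (Q G).2, hMP0 (Q A).2 (brP' _ _ B.2),
              hPM0 B.2 (brM _ _ (Q A).2 (Q G).2)]
          ring
        rw [z1] at k1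
        rw [z2] at k2
        simp only [kosz_def] at k1 k2
        have s := hskewl (A : L) (B : L) (G : L)
        linarith
      exact hPnd _ (brP' _ _ A.2) habr
    · -- condition (2)
      intro a B G
      have k1 := hk (a : L) (B : L) ((Q G : ↥M) : L)
      rw [hJP, hJM, Q.symm_apply_apply, kosz_neg3] at k1
      have z1 : kosz h (a : L) ((Q B : ↥M) : L) ((Q G : ↥M) : L)
          = 2 * hm (Dm a (Q B)) (Q G) := by
        rw [kosz_def, ← LieSubalgebra.coe_bracket, ← LieSubalgebra.coe_bracket,
            ← LieSubalgebra.coe_bracket, h_MM, h_MM, h_MM]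
        linarith [hKm a (Q B) (Q G)]
      rw [z1] at k1
      simp only [kosz_def] at k1
      have z2 : h (a : L) ⁅(B : L), (G : L)⁆ = 0 := hMP0 a.2 (brP _ _ G.2)
      have r : h ((Q.symm (Dm a (Q B)) : ↥P) : L) (G : L) = hm (Dm a (Q B)) (Q G) := by
        rw [h_PP, Q.apply_symm_apply]
      linarith
    · -- condition (3)
      have S13 : ∀ x y z : ↥P,
          h ⁅((Q x : ↥M) : L), (y : L)⁆ (z : L) + h (y : L) ⁅((Q x : ↥M) : L), (z : L)⁆
          = h ⁅((Q z : ↥M) : L), (y : L)⁆ (x : L)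
            + h (y : L) ⁅((Q z : ↥M) : L), (x : L)⁆ := by
        intro x y z
        have k1 := hk (y : L) (x : L) (z : L)
        rw [hJP, hJP] at k1
        simp only [kosz_def] at k1
        have z1 : h ((Q x : ↥M) : L) ⁅(y : L), (z : L)⁆ = 0 := hMP0 (Q x).2 (brP _ _ z.2)
        have z2 : h ⁅(y : L), (x : L)⁆ ((Q z : ↥M) : L) = 0 := hPM0 (brP _ _ x.2) (Q z).2
        have s1 := hskewl (y : L) ((Q x : ↥M) : L) (z : L)
        have s2 := hskewr ((x : L)) (y : L) ((Q z : ↥M) : L)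
        have s3 := hskewr ((y : L)) (x : L) ((Q z : ↥M) : L)
        have u1 := hsymm ((x : L)) ⁅((Q z : ↥M) : L), (y : L)⁆
        linarith
      intro x y z
      have c1 := S13 x z y
      have u1 := hsymm ((y : L)) ⁅((Q x : ↥M) : L), (z : L)⁆
      have u2 := hsymm ⁅((Q x : ↥M) : L), (y : L)⁆ (z : L)
      have u3 := hsymm ((x : L)) ⁅((Q y : ↥M) : L), (z : L)⁆
      have u4 := hsymm ⁅((Q y : ↥M) : L), (x : L)⁆ (z : L)
      linarith
  · -- backward direction
    rintro ⟨h1, h2, h3⟩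
    -- full symmetry of S
    have S23 : ∀ x y z : ↥P,
        h ⁅((Q x : ↥M) : L), (y : L)⁆ (z : L) + h (y : L) ⁅((Q x : ↥M) : L), (z : L)⁆
        = h ⁅((Q x : ↥M) : L), (z : L)⁆ (y : L)
          + h (z : L) ⁅((Q x : ↥M) : L), (y : L)⁆ := by
      intro x y z
      linarith [hsymm ⁅((Q x : ↥M) : L), (y : L)⁆ (z : L),
                hsymm ((y : L)) ⁅((Q x : ↥M) : L), (z : L)⁆]
    have S13 : ∀ x y z : ↥P,
        h ⁅((Q x : ↥M) : L), (y : L)⁆ (z : L) + h (y : L) ⁅((Q x : ↥M) : L), (z : L)⁆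
        = h ⁅((Q z : ↥M) : L), (y : L)⁆ (x : L)
          + h (y : L) ⁅((Q z : ↥M) : L), (x : L)⁆ := by
      intro x y z
      linarith [h3 x y z, S23 y x z, h3 y z x]
    -- the eight pure cases
    have e1 : ∀ A B C : ↥P,
        kosz h (A : L) (J (B : L)) (C : L) + kosz h (A : L) (B : L) (J (C : L)) = 0 := by
      intro A B C
      rw [hJP, hJP]
      simp only [kosz_def]
      have z1 : h ((Q B : ↥M) : L) ⁅(A : L), (C : L)⁆ = 0 := hMP0 (Q B).2 (brP _ _ C.2)
      have z2 : h ⁅(A : L), (B : L)⁆ ((Q C : ↥M) : L) = 0 := hPM0 (brP _ _ B.2) (Q C).2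
      have s1 := hskewl (A : L) ((Q B : ↥M) : L) (C : L)
      have s2 := hskewr (B : L) (A : L) ((Q C : ↥M) : L)
      have s3 := hskewr (A : L) (B : L) ((Q C : ↥M) : L)
      have u1 := hsymm (B : L) ⁅((Q C : ↥M) : L), (A : L)⁆
      have sA := S13 B A C
      linarith
    have e2 : ∀ (A B : ↥P) (c : ↥M),
        kosz h (A : L) (J (B : L)) (c : L) + kosz h (A : L) (B : L) (J (c : L)) = 0 := by
      intro A B c
      rw [hJP, hJM, kosz_neg3]
      have z1 : kosz h (A : L) ((Q B : ↥M) : L) (c : L) = 0 := by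
        rw [kosz_def, hPM0 (brP' _ _ A.2) c.2, hMP0 (Q B).2 (brP' _ _ A.2),
            hPM0 A.2 (brM _ _ (Q B).2 c.2)]
        ring
      have z2 : kosz h (A : L) (B : L) ((Q.symm c : ↥P) : L) = 0 := by
        rw [kosz_def, h1 A B, h1 A (Q.symm c), h1 B (Q.symm c)]
        simp
      rw [z1, z2]; ring
    have e3 : ∀ (A : ↥P) (b : ↥M) (C : ↥P),
        kosz h (A : L) (J (b : L)) (C : L) + kosz h (A : L) (b : L) (J (C : L)) = 0 := by
      intro A b C
      rw [hJM, hJP, kosz_neg2]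
      have z1 : kosz h (A : L) ((Q.symm b : ↥P) : L) (C : L) = 0 := by
        rw [kosz_def, h1 A (Q.symm b), h1 A C, h1 (Q.symm b) C]
        simp
      have z2 : kosz h (A : L) (b : L) ((Q C : ↥M) : L) = 0 := by
        rw [kosz_def, hPM0 (brP' _ _ A.2) (Q C).2, hMP0 b.2 (brP' _ _ A.2),
            hPM0 A.2 (brM _ _ b.2 (Q C).2)]
        ring
      rw [z1, z2]; ring
    have e4 : ∀ (A : ↥P) (b c : ↥M),
        kosz h (A : L) (J (b : L)) (c : L) + kosz h (A : L) (b : L) (J (c : L)) = 0 := by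
      intro A b c
      rw [hJM, hJM, kosz_neg2, kosz_neg3]
      have hb : ((Q (Q.symm b) : ↥M) : L) = (b : L) := by rw [Q.apply_symm_apply]
      have hc : ((Q (Q.symm c) : ↥M) : L) = (c : L) := by rw [Q.apply_symm_apply]
      simp only [kosz_def]
      have f1 : h ⁅(A : L), ((Q.symm b : ↥P) : L)⁆ (c : L) = 0 := by
        rw [h1 A (Q.symm b)]; simp
      have f2 : h ((b : L)) ⁅(A : L), ((Q.symm c : ↥P) : L)⁆ = 0 := by
        rw [h1 A (Q.symm c)]; simp
      have s1 : h ((Q.symm b : ↥P) : L) ⁅(A : L), (c : L)⁆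
          = -h ((Q.symm b : ↥P) : L) ⁅((Q (Q.symm c) : ↥M) : L), (A : L)⁆ := by
        rw [hc]; exact hskewr _ _ _
      have s2 : h ((A : L)) ⁅((Q.symm b : ↥P) : L), (c : L)⁆
          = -h ((A : L)) ⁅((Q (Q.symm c) : ↥M) : L), ((Q.symm b : ↥P) : L)⁆ := by
        rw [hc]; exact hskewr _ _ _
      have s3 : h ⁅(A : L), (b : L)⁆ ((Q.symm c : ↥P) : L)
          = -h ⁅((Q (Q.symm b) : ↥M) : L), (A : L)⁆ ((Q.symm c : ↥P) : L) := by
        rw [hb]; exact hskewl _ _ _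
      have s4 : h ((A : L)) ⁅(b : L), ((Q.symm c : ↥P) : L)⁆
          = h ((A : L)) ⁅((Q (Q.symm b) : ↥M) : L), ((Q.symm c : ↥P) : L)⁆ := by
        rw [hb]
      have u1 := hsymm ((Q.symm b : ↥P) : L) ⁅((Q (Q.symm c) : ↥M) : L), (A : L)⁆
      have sA := S13 (Q.symm b) A (Q.symm c)
      linarith
    have e5 : ∀ (a : ↥M) (B C : ↥P),
        kosz h (a : L) (J (B : L)) (C : L) + kosz h (a : L) (B : L) (J (C : L)) = 0 := by
      intro a B C
      rw [hJP, hJP]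
      have z1 : kosz h (a : L) ((Q B : ↥M) : L) (C : L) = 0 := by
        rw [kosz_def, hMP0 (brM _ _ a.2 (Q B).2) C.2, hMP0 (Q B).2 (brP _ _ C.2),
            hMP0 a.2 (brP _ _ C.2)]
        ring
      have z2 : kosz h (a : L) (B : L) ((Q C : ↥M) : L) = 0 := by
        rw [kosz_def, hPM0 (brP _ _ B.2) (Q C).2, hPM0 B.2 (brM _ _ a.2 (Q C).2),
            hMP0 a.2 (brP' _ _ B.2)]
        ring
      rw [z1, z2]; ring
    have e6 : ∀ (a : ↥M) (B : ↥P) (c : ↥M),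
        kosz h (a : L) (J (B : L)) (c : L) + kosz h (a : L) (B : L) (J (c : L)) = 0 := by
      intro a B c
      rw [hJP, hJM, kosz_neg3]
      have z1 : kosz h (a : L) ((Q B : ↥M) : L) (c : L) = 2 * hm (Dm a (Q B)) c := by
        rw [kosz_def, ← LieSubalgebra.coe_bracket, ← LieSubalgebra.coe_bracket,
            ← LieSubalgebra.coe_bracket, h_MM, h_MM, h_MM]
        linarith [hKm a (Q B) c]
      have z2 : kosz h (a : L) (B : L) ((Q.symm c : ↥P) : L) = 2 * hm (Dm a (Q B)) c := by
        rw [kosz_def, hMP0 a.2 (brP _ _ (Q.symm c).2)]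
        have r := h2 a B (Q.symm c)
        have r2 : h ((Q.symm (Dm a (Q B)) : ↥P) : L) ((Q.symm c : ↥P) : L)
            = hm (Dm a (Q B)) c := by
          rw [h_PP, Q.apply_symm_apply, Q.apply_symm_apply]
        linarith
      rw [z1, z2]; ring
    have e7 : ∀ (a b : ↥M) (C : ↥P),
        kosz h (a : L) (J (b : L)) (C : L) + kosz h (a : L) (b : L) (J (C : L)) = 0 := by
      intro a b C
      rw [hJM, hJP, kosz_neg2]
      have z1 : kosz h (a : L) (b : L) ((Q C : ↥M) : L) = 2 * hm (Dm a b) (Q C) := by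
        rw [kosz_def, ← LieSubalgebra.coe_bracket, ← LieSubalgebra.coe_bracket,
            ← LieSubalgebra.coe_bracket, h_MM, h_MM, h_MM]
        linarith [hKm a b (Q C)]
      have z2 : kosz h (a : L) ((Q.symm b : ↥P) : L) (C : L) = 2 * hm (Dm a b) (Q C) := by
        rw [kosz_def, hMP0 a.2 (brP' _ _ (Q.symm b).2)]
        have r := h2 a (Q.symm b) C
        rw [Q.apply_symm_apply] at r
        have r2 : h ((Q.symm (Dm a b) : ↥P) : L) ((C : ↥P) : L) = hm (Dm a b) (Q C) := by
          rw [h_PP, Q.apply_symm_apply]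
        linarith
      rw [z1, z2]; ring
    have e8 : ∀ (a b c : ↥M),
        kosz h (a : L) (J (b : L)) (c : L) + kosz h (a : L) (b : L) (J (c : L)) = 0 := by
      intro a b c
      rw [hJM, hJM, kosz_neg2, kosz_neg3]
      have z1 : kosz h (a : L) ((Q.symm b : ↥P) : L) (c : L) = 0 := by
        rw [kosz_def, hPM0 (brP _ _ (Q.symm b).2) c.2, hPM0 (Q.symm b).2 (brM _ _ a.2 c.2),
            hMP0 a.2 (brP' _ _ (Q.symm b).2)]
        ring
      have z2 : kosz h (a : L) (b : L) ((Q.symm c : ↥P) : L) = 0 := by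
        rw [kosz_def, hMP0 (brM _ _ a.2 b.2) (Q.symm c).2, hMP0 b.2 (brP _ _ (Q.symm c).2),
            hMP0 a.2 (brP _ _ (Q.symm c).2)]
        ring
      rw [z1, z2]; ring
    -- glue by trilinearity
    intro X Y Z
    obtain ⟨A, a, rfl⟩ := hdec X
    obtain ⟨B, b, rfl⟩ := hdec Y
    obtain ⟨C, c, rfl⟩ := hdec Z
    simp only [map_add, kosz_add1, kosz_add2, kosz_add3]
    linarith [e1 A B C, e2 A B c, e3 A b C, e4 A b c, e5 a B C, e6 a B c, e7 a b C, e8 a b c]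
end

section
/- Let 𝔤 be a finite-dimensional real Lie algebra which is the vector space direct sum of an abelian Lie ideal 𝔤₊ and a Lie subalgebra 𝔤₋. Let h₋ be a nondegenerate symmetric bilinear form on 𝔤₋ whose Levi-Civita connection ∇⁻ is flat, let Q : 𝔤₊ → 𝔤₋ be a linear isomorphism, set h₊(X,Y) := h₋(QX,QY), and suppose the bracket satisfies [X₋,Y₊] = Q⁻¹(∇⁻_{X₋}(QY₊)) for all X₋ ∈ 𝔤₋ and Y₊ ∈ 𝔤₊. Let h be the form on 𝔤 restricting to h₊ on 𝔤₊, to h₋ on 𝔤₋, with h(𝔤₊,𝔤₋) = 0, let J(X₊) = QX₊ for X₊ ∈ 𝔤₊ and J(X₋) = −Q⁻¹X₋ for X₋ ∈ 𝔤₋, and let ∇ be the Levi-Civita connection of h. Then ∇_X(JY) = J(∇_X Y) for all X, Y ∈ 𝔤 (so the associated Born structure is integrable), and h is flat: ∇_X∇_Y Z − ∇_Y∇_X Z − ∇_{[X,Y]}Z = 0 for all X, Y, Z ∈ 𝔤. -/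
/-- From any flat pseudo-Riemannian Lie algebra `(𝔤₋, h₋)` one obtains an integrable
Born structure on the semidirect product `𝔤₊ ⋊_φ 𝔤₋` with `φ(X₋) = Q⁻¹ ∘ ∇⁻_{X₋} ∘ Q`;
moreover the resulting metric `h` is flat. -/
theorem born_from_flat
    (L : Type*) [LieRing L] [LieAlgebra ℝ L] [FiniteDimensional ℝ L]
    (P M : LieSubalgebra ℝ L)
    (hcompl : IsCompl P.toSubmodule M.toSubmodule)
    (habelian : ∀ X Y : ↥P, ⁅(X : L), (Y : L)⁆ = 0)
    (hideal : ∀ (X : L) (Y : ↥P), ⁅X, (Y : L)⁆ ∈ P)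
    (hm : (↥M) →ₗ[ℝ] (↥M) →ₗ[ℝ] ℝ)
    (hm_symm : ∀ X Y, hm X Y = hm Y X)
    (hm_nondeg : ∀ X, (∀ Y, hm X Y = 0) → X = 0)
    (Dm : (↥M) →ₗ[ℝ] (↥M) →ₗ[ℝ] (↥M))
    (hKm : ∀ X Y Z : ↥M, 2 * hm (Dm X Y) Z = hm ⁅X, Y⁆ Z - hm Y ⁅X, Z⁆ - hm X ⁅Y, Z⁆)
    (hm_flat : ∀ X Y Z : ↥M, Dm X (Dm Y Z) - Dm Y (Dm X Z) - Dm ⁅X, Y⁆ Z = 0)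
    (Q : (↥P) ≃ₗ[ℝ] (↥M))
    (hbracket : ∀ (X : ↥M) (Y : ↥P),
      ⁅(X : L), (Y : L)⁆ = ((Q.symm (Dm X (Q Y)) : ↥P) : L))
    (h : L →ₗ[ℝ] L →ₗ[ℝ] ℝ)
    (h_PP : ∀ X Y : ↥P, h (X : L) (Y : L) = hm (Q X) (Q Y))
    (h_MM : ∀ X Y : ↥M, h (X : L) (Y : L) = hm X Y)
    (h_PM : ∀ (X : ↥P) (Y : ↥M), h (X : L) (Y : L) = 0)
    (h_MP : ∀ (X : ↥M) (Y : ↥P), h (X : L) (Y : L) = 0)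
    (J : L →ₗ[ℝ] L)
    (hJP : ∀ X : ↥P, J (X : L) = ((Q X : ↥M) : L))
    (hJM : ∀ X : ↥M, J (X : L) = -((Q.symm X : ↥P) : L))
    (D : L →ₗ[ℝ] L →ₗ[ℝ] L)
    (hKoszul : ∀ X Y Z : L, 2 * h (D X Y) Z = h ⁅X, Y⁆ Z - h Y ⁅X, Z⁆ - h X ⁅Y, Z⁆) :
    (∀ X Y : L, D X (J Y) = J (D X Y)) ∧
    (∀ X Y Z : L, D X (D Y Z) - D Y (D X Z) - D ⁅X, Y⁆ Z = 0) := by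
  classical
  -- projections
  set πP : L →ₗ[ℝ] ↥P := Submodule.linearProjOfIsCompl P.toSubmodule M.toSubmodule hcompl with hπP
  set πM : L →ₗ[ℝ] ↥M := Submodule.linearProjOfIsCompl M.toSubmodule P.toSubmodule hcompl.symm with hπM
  have hsum : ∀ v : L, ((πP v : L)) + ((πM v : L)) = v := fun v =>
    Submodule.projection_add_projection_eq_self hcompl v
  have hπPP : ∀ x : ↥P, πP (x : L) = x := fun x =>
    Submodule.linearProjOfIsCompl_apply_left hcompl x
  have hπPM : ∀ x : ↥M, πP (x : L) = 0 := fun x =>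
    Submodule.linearProjOfIsCompl_apply_right hcompl x
  have hπMM : ∀ x : ↥M, πM (x : L) = x := fun x =>
    Submodule.linearProjOfIsCompl_apply_left hcompl.symm x
  have hπMP : ∀ x : ↥P, πM (x : L) = 0 := fun x =>
    Submodule.linearProjOfIsCompl_apply_right hcompl.symm x
  -- metric compatibility of Dm
  have hcompat : ∀ Z X Y : ↥M, hm (Dm Z X) Y + hm X (Dm Z Y) = 0 := by
    intro Z X Y
    have h1 := hKm Z X Y
    have h2 := hKm Z Y X
    have e1 : hm ⁅Z, X⁆ Y = hm Y ⁅Z, X⁆ := hm_symm _ _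
    have e2 : hm ⁅Z, Y⁆ X = hm X ⁅Z, Y⁆ := hm_symm _ _
    have e3 : hm Z ⁅Y, X⁆ = - hm Z ⁅X, Y⁆ := by
      rw [← lie_skew X Y]; simp only [map_neg, neg_neg]
    have e4 : hm X (Dm Z Y) = hm (Dm Z Y) X := hm_symm _ _
    linarith
  -- evaluation of h in components
  have hev : ∀ v w : L, h v w = hm (Q (πP v)) (Q (πP w)) + hm (πM v) (πM w) := by
    intro v w
    conv_lhs => rw [← hsum v, ← hsum w]
    simp only [map_add, LinearMap.add_apply, h_PP, h_MM, h_PM, h_MP]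
    ring
  -- nondegeneracy of h
  have hnd : ∀ v : L, (∀ w : L, h v w = 0) → v = 0 := by
    intro v hv
    have hMv : πM v = 0 := by
      apply hm_nondeg
      intro Y
      have := hv (Y : L)
      rw [hev] at this
      simpa [hπPM, hπMM] using this
    have hPv : πP v = 0 := by
      have : Q (πP v) = 0 := by
        apply hm_nondeg
        intro Y
        have := hv ((Q.symm Y : ↥P) : L)
        rw [hev] at this
        simpa [hπPP, hπMP, hMv] using this
      simpa using congrArg Q.symm this
    rw [← hsum v, hPv, hMv]
    simp
  -- bracket decomposition
  have hbr : ∀ X Y : L, ⁅X, Y⁆ =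
      ((⁅πM X, πM Y⁆ : ↥M) : L)
      + ((Q.symm (Dm (πM X) (Q (πP Y))) : ↥P) : L)
      - ((Q.symm (Dm (πM Y) (Q (πP X))) : ↥P) : L) := by
    intro X Y
    conv_lhs => rw [← hsum X, ← hsum Y]
    rw [add_lie, lie_add, lie_add]
    have h1 : ⁅((πP X : L)), ((πM Y : L))⁆ = -((Q.symm (Dm (πM Y) (Q (πP X))) : ↥P) : L) := by
      rw [← lie_skew, hbracket]
    have h2 : ⁅((πM X : L)), ((πM Y : L))⁆ = ((⁅πM X, πM Y⁆ : ↥M) : L) := rfl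
    rw [habelian (πP X) (πP Y), h1, hbracket (πM X) (πP Y), h2]
    abel
  have hbrP : ∀ X Y : L, πP ⁅X, Y⁆ =
      Q.symm (Dm (πM X) (Q (πP Y))) - Q.symm (Dm (πM Y) (Q (πP X))) := by
    intro X Y
    rw [hbr X Y, map_sub, map_add, hπPM, hπPP, hπPP]
    abel
  have hbrM : ∀ X Y : L, πM ⁅X, Y⁆ = ⁅πM X, πM Y⁆ := by
    intro X Y
    rw [hbr X Y, map_sub, map_add, hπMM, hπMP, hπMP]
    abel
  -- explicit formula for D
  have hD : ∀ X Y : L, D X Y =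
      ((Q.symm (Dm (πM X) (Q (πP Y))) : ↥P) : L) + ((Dm (πM X) (πM Y) : ↥M) : L) := by
    intro X Y
    set W : L := ((Q.symm (Dm (πM X) (Q (πP Y))) : ↥P) : L) + ((Dm (πM X) (πM Y) : ↥M) : L)
      with hW
    have hWP : πP W = Q.symm (Dm (πM X) (Q (πP Y))) := by
      rw [hW, map_add, hπPP, hπPM]; abel
    have hWM : πM W = Dm (πM X) (πM Y) := by
      rw [hW, map_add, hπMM, hπMP]; abel
    have key : ∀ Z : L, h (D X Y) Z = h W Z := by
      intro Z
      have main : 2 * h (D X Y) Z = 2 * h W Z := by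
        rw [hKoszul X Y Z]
        rw [hev ⁅X,Y⁆ Z, hev Y ⁅X,Z⁆, hev X ⁅Y,Z⁆, hev W Z]
        rw [hbrP X Y, hbrM X Y, hbrP X Z, hbrM X Z, hbrP Y Z, hbrM Y Z, hWP, hWM]
        simp only [map_sub, LinearMap.sub_apply, LinearEquiv.apply_symm_apply]
        have c1 := hcompat (πM X) (Q (πP Y)) (Q (πP Z))
        have c2 := hcompat (πM Z) (Q (πP Y)) (Q (πP X))
        have c3 := hcompat (πM Y) (Q (πP X)) (Q (πP Z))
        have s2 := hm_symm (Dm (πM Z) (Q (πP Y))) (Q (πP X))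
        have k := hKm (πM X) (πM Y) (πM Z)
        linarith
      linarith
    have hz := hnd (D X Y - W) (fun Z => by
      rw [map_sub, LinearMap.sub_apply, key, sub_self])
    exact sub_eq_zero.mp hz
  have hDπP : ∀ X Y : L, πP (D X Y) = Q.symm (Dm (πM X) (Q (πP Y))) := by
    intro X Y; rw [hD, map_add, hπPP, hπPM]; abel
  have hDπM : ∀ X Y : L, πM (D X Y) = Dm (πM X) (πM Y) := by
    intro X Y; rw [hD, map_add, hπMM, hπMP]; abel
  constructor
  · intro X Y
    have hJY : J Y = ((Q (πP Y) : ↥M) : L) + (-((Q.symm (πM Y) : ↥P) : L)) := by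
      conv_lhs => rw [← hsum Y]
      rw [map_add, hJP, hJM]
    have hπPJY : πP (J Y) = -(Q.symm (πM Y)) := by
      rw [hJY, map_add, map_neg, hπPM, hπPP]; abel
    have hπMJY : πM (J Y) = Q (πP Y) := by
      rw [hJY, map_add, map_neg, hπMM, hπMP]; abel
    rw [hD X (J Y), hD X Y, hπPJY, hπMJY]
    rw [map_add, hJP, hJM]
    simp only [map_neg, LinearEquiv.apply_symm_apply, LinearEquiv.symm_apply_apply,
      NegMemClass.coe_neg]
    abel
  · intro X Y Z
    have f1 : ∀ W : ↥M, Dm (πM X) (Dm (πM Y) W)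
        = Dm (πM Y) (Dm (πM X) W) + Dm ⁅πM X, πM Y⁆ W := by
      intro W
      have hf := hm_flat (πM X) (πM Y) W
      rw [sub_sub, sub_eq_zero] at hf
      exact hf
    rw [hD X (D Y Z), hD Y (D X Z), hD ⁅X, Y⁆ Z, hDπP Y Z, hDπM Y Z, hDπP X Z, hDπM X Z,
      hbrM X Y, LinearEquiv.apply_symm_apply, LinearEquiv.apply_symm_apply,
      f1 (Q (πP Z)), f1 (πM Z)]
    have cP : ∀ x y : ↥P, ((x + y : ↥P) : L) = (x : L) + (y : L) := fun _ _ => rfl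
    have cM : ∀ x y : ↥M, ((x + y : ↥M) : L) = (x : L) + (y : L) := fun _ _ => rfl
    simp only [map_add, cP, cM]
    abel
end

section
/- Let 𝔤 be a finite-dimensional real Lie algebra which is the vector space direct sum of an abelian Lie ideal 𝔤₊ and a Lie subalgebra 𝔤₋. Let h₋ be a nondegenerate symmetric bilinear form on 𝔤₋ whose Levi-Civita connection ∇⁻ is flat, and let I₋ be an endomorphism of 𝔤₋ with I₋² = −Id, h₋(I₋X,I₋Y) = h₋(X,Y), and ∇⁻_X(I₋Y) = I₋(∇⁻_X Y) for all X, Y ∈ 𝔤₋ (a flat pseudo-Kähler structure). Let Q : 𝔤₊ → 𝔤₋ be a linear isomorphism, set h₊(X,Y) := h₋(QX,QY) and I₊ := −Q⁻¹∘I₋∘Q, and suppose the bracket satisfies [X₋,Y₊] = Q⁻¹(∇⁻_{X₋}(QY₊)) for all X₋ ∈ 𝔤₋, Y₊ ∈ 𝔤₊. Let h restrict to h₊ on 𝔤₊, to h₋ on 𝔤₋, with h(𝔤₊,𝔤₋) = 0; let J(X₊) = QX₊, J(X₋) = −Q⁻¹X₋; let I = I₊ on 𝔤₊ and I = I₋ on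 𝔤₋; and let ∇ be the Levi-Civita connection of h. Then (h, J, I) is a pseudo-hyperkähler structure on 𝔤: J² = I² = −Id, I∘J = −J∘I, h(JX,JY) = h(X,Y), h(IX,IY) = h(X,Y), ∇_X(JY) = J(∇_X Y) and ∇_X(IY) = I(∇_X Y) for all X, Y ∈ 𝔤. -/
/-- From a flat pseudo-Kähler Lie algebra `(𝔤₋, h₋, I₋)` one obtains a
pseudo-hyperkähler structure `(h, J, I)` on the semidirect product
`𝔤₊ ⋊_φ 𝔤₋` with `φ(X₋) = Q⁻¹ ∘ ∇⁻_{X₋} ∘ Q`. -/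
theorem hyperkahler_from_flat_kahler
    (L : Type*) [LieRing L] [LieAlgebra ℝ L] [FiniteDimensional ℝ L]
    (P M : LieSubalgebra ℝ L)
    (hcompl : IsCompl P.toSubmodule M.toSubmodule)
    (habelian : ∀ X Y : ↥P, ⁅(X : L), (Y : L)⁆ = 0)
    (hideal : ∀ (X : L) (Y : ↥P), ⁅X, (Y : L)⁆ ∈ P)
    (hm : (↥M) →ₗ[ℝ] (↥M) →ₗ[ℝ] ℝ)
    (hm_symm : ∀ X Y, hm X Y = hm Y X)
    (hm_nondeg : ∀ X, (∀ Y, hm X Y = 0) → X = 0)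
    (Dm : (↥M) →ₗ[ℝ] (↥M) →ₗ[ℝ] (↥M))
    (hKm : ∀ X Y Z : ↥M, 2 * hm (Dm X Y) Z = hm ⁅X, Y⁆ Z - hm Y ⁅X, Z⁆ - hm X ⁅Y, Z⁆)
    (hm_flat : ∀ X Y Z : ↥M, Dm X (Dm Y Z) - Dm Y (Dm X Z) - Dm ⁅X, Y⁆ Z = 0)
    (Im : (↥M) →ₗ[ℝ] (↥M))
    (hIm_sq : ∀ X, Im (Im X) = -X)
    (hIm_orth : ∀ X Y, hm (Im X) (Im Y) = hm X Y)
    (hIm_par : ∀ X Y, Dm X (Im Y) = Im (Dm X Y))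
    (Q : (↥P) ≃ₗ[ℝ] (↥M))
    (hbracket : ∀ (X : ↥M) (Y : ↥P),
      ⁅(X : L), (Y : L)⁆ = ((Q.symm (Dm X (Q Y)) : ↥P) : L))
    (h : L →ₗ[ℝ] L →ₗ[ℝ] ℝ)
    (h_PP : ∀ X Y : ↥P, h (X : L) (Y : L) = hm (Q X) (Q Y))
    (h_MM : ∀ X Y : ↥M, h (X : L) (Y : L) = hm X Y)
    (h_PM : ∀ (X : ↥P) (Y : ↥M), h (X : L) (Y : L) = 0)
    (h_MP : ∀ (X : ↥M) (Y : ↥P), h (X : L) (Y : L) = 0)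
    (J : L →ₗ[ℝ] L)
    (hJP : ∀ X : ↥P, J (X : L) = ((Q X : ↥M) : L))
    (hJM : ∀ X : ↥M, J (X : L) = -((Q.symm X : ↥P) : L))
    (I : L →ₗ[ℝ] L)
    (hIP : ∀ X : ↥P, I (X : L) = -((Q.symm (Im (Q X)) : ↥P) : L))
    (hIM : ∀ X : ↥M, I (X : L) = ((Im X : ↥M) : L))
    (D : L →ₗ[ℝ] L →ₗ[ℝ] L)
    (hKoszul : ∀ X Y Z : L, 2 * h (D X Y) Z = h ⁅X, Y⁆ Z - h Y ⁅X, Z⁆ - h X ⁅Y, Z⁆) :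
    (∀ X, J (J X) = -X) ∧
    (∀ X, I (I X) = -X) ∧
    (∀ X, I (J X) = - J (I X)) ∧
    (∀ X Y, h (J X) (J Y) = h X Y) ∧
    (∀ X Y, h (I X) (I Y) = h X Y) ∧
    (∀ X Y, D X (J Y) = J (D X Y)) ∧
    (∀ X Y, D X (I Y) = I (D X Y)) := by

  -- bracket lemmas
  have br_mm : ∀ X Y : ↥M, ⁅(X : L), (Y : L)⁆ = ((⁅X, Y⁆ : ↥M) : L) :=
    fun X Y => (LieSubalgebra.coe_bracket M X Y).symm
  have br_pm : ∀ (X : ↥P) (Y : ↥M),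
      ⁅(X : L), (Y : L)⁆ = -((Q.symm (Dm Y (Q X)) : ↥P) : L) := by
    intro X Y
    rw [← lie_skew, hbracket Y X]
  -- decomposition
  have decomp : ∀ X : L, ∃ (p : ↥P) (m : ↥M), X = (p : L) + (m : L) := by
    intro X
    have hx : X ∈ P.toSubmodule ⊔ M.toSubmodule := by
      rw [hcompl.sup_eq_top]; trivial
    rcases Submodule.mem_sup.1 hx with ⟨a, ha, b, hb, hs⟩
    exact ⟨⟨a, ha⟩, ⟨b, hb⟩, hs.symm⟩
  -- nondegeneracy of h
  have hnd : ∀ W : L, (∀ p : ↥P, h W (p : L) = 0) → (∀ m : ↥M, h W (m : L) = 0) → W = 0 := by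
    intro W hWp hWm
    obtain ⟨p, m, rfl⟩ := decomp W
    have hp : p = 0 := by
      have h1 : ∀ z : ↥M, hm (Q p) z = 0 := by
        intro z
        obtain ⟨p', rfl⟩ := Q.surjective z
        have hq := hWp p'
        rw [map_add, LinearMap.add_apply, h_PP, h_MP, add_zero] at hq
        exact hq
      exact Q.map_eq_zero_iff.mp (hm_nondeg _ h1)
    have hm0 : m = 0 := by
      have h1 : ∀ z : ↥M, hm m z = 0 := by
        intro z
        have hq := hWm z
        rw [map_add, LinearMap.add_apply, h_PM, h_MM, zero_add] at hq
        exact hq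
      exact hm_nondeg _ h1
    rw [hp, hm0]; simp
  -- metric skew-symmetry of Dm
  have skew : ∀ X Y Z : ↥M, hm (Dm X Y) Z = - hm Y (Dm X Z) := by
    intro X Y Z
    have h1 := hKm X Y Z
    have h2 := hKm X Z Y
    have h3 : hm X ⁅Z, Y⁆ = - hm X ⁅Y, Z⁆ := by rw [← lie_skew Z Y, map_neg]
    have h4 := hm_symm ⁅X, Y⁆ Z
    have h5 := hm_symm Y ⁅X, Z⁆
    have h6 := hm_symm Z ⁅X, Y⁆
    have h7 := hm_symm (Dm X Z) Y
    linarith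
  -- characterization of D
  have Dval : ∀ (X Y C : L), (∀ p : ↥P, 2 * h (D X Y) (p : L) = 2 * h C (p : L)) →
      (∀ m : ↥M, 2 * h (D X Y) (m : L) = 2 * h C (m : L)) → D X Y = C := by
    intro X Y C hp' hm'
    have hz : D X Y - C = 0 := by
      apply hnd
      · intro p
        have := hp' p
        rw [map_sub, LinearMap.sub_apply]
        linarith
      · intro m
        have := hm' m
        rw [map_sub, LinearMap.sub_apply]
        linarith
    exact sub_eq_zero.mp hz
  -- the four component values of D
  have hD_mm : ∀ X Y : ↥M, D (X : L) (Y : L) = ((Dm X Y : ↥M) : L) := by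
    intro X Y
    apply Dval
    · intro p
      have k := hKoszul (X : L) (Y : L) (p : L)
      rw [br_mm X Y, hbracket X p, hbracket Y p, h_MP, h_MP, h_MP] at k
      rw [h_MP]
      linarith
    · intro z
      have k := hKoszul (X : L) (Y : L) (z : L)
      rw [br_mm X Y, br_mm X z, br_mm Y z, h_MM, h_MM, h_MM] at k
      rw [h_MM]
      have hk := hKm X Y z
      linarith
  have hD_mp : ∀ (X : ↥M) (Y : ↥P), D (X : L) (Y : L) = ((Q.symm (Dm X (Q Y)) : ↥P) : L) := by
    intro X Y
    apply Dval
    · intro p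
      have k := hKoszul (X : L) (Y : L) (p : L)
      rw [hbracket X Y, habelian Y p, hbracket X p, h_PP, h_PP, map_zero,
        LinearEquiv.apply_symm_apply, LinearEquiv.apply_symm_apply] at k
      rw [h_PP, LinearEquiv.apply_symm_apply]
      have hs := skew X (Q Y) (Q p)
      linarith
    · intro z
      have k := hKoszul (X : L) (Y : L) (z : L)
      rw [hbracket X Y, br_mm X z, br_pm Y z, h_PM, h_PM, map_neg, h_MP] at k
      rw [h_PM]
      linarith
  have hD_pm : ∀ (X : ↥P) (Y : ↥M), D (X : L) (Y : L) = 0 := by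
    intro X Y
    apply Dval
    · intro p
      have k := hKoszul (X : L) (Y : L) (p : L)
      rw [br_pm X Y, habelian X p, hbracket Y p, map_zero, map_neg, LinearMap.neg_apply,
        h_PP, h_PP, LinearEquiv.apply_symm_apply, LinearEquiv.apply_symm_apply] at k
      rw [map_zero, LinearMap.zero_apply]
      have hs := skew Y (Q X) (Q p)
      have h5 := hm_symm (Q X) (Dm Y (Q p))
      linarith
    · intro z
      have k := hKoszul (X : L) (Y : L) (z : L)
      rw [br_pm X Y, br_pm X z, br_mm Y z, map_neg, LinearMap.neg_apply, h_PM,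
        map_neg, h_MP, h_PM] at k
      rw [map_zero, LinearMap.zero_apply]
      linarith
  have hD_pp : ∀ (X : ↥P) (Y : ↥P), D (X : L) (Y : L) = 0 := by
    intro X Y
    apply Dval
    · intro p
      have k := hKoszul (X : L) (Y : L) (p : L)
      rw [habelian X Y, habelian X p, habelian Y p, map_zero, map_zero, map_zero,
        LinearMap.zero_apply] at k
      rw [map_zero, LinearMap.zero_apply]
      linarith
    · intro z
      have k := hKoszul (X : L) (Y : L) (z : L)
      rw [habelian X Y, br_pm X z, br_pm Y z, map_neg, map_neg, h_PP, h_PP,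
        LinearEquiv.apply_symm_apply, LinearEquiv.apply_symm_apply, map_zero,
        LinearMap.zero_apply] at k
      rw [map_zero, LinearMap.zero_apply]
      have hs := skew z (Q X) (Q Y)
      have h5 := hm_symm (Q Y) (Dm z (Q X))
      have h6 := hm_symm (Q X) (Dm z (Q Y))
      linarith
  refine ⟨?_, ?_, ?_, ?_, ?_, ?_, ?_⟩
  · -- J ∘ J = -1
    intro X
    obtain ⟨p, m, rfl⟩ := decomp X
    simp only [map_add, hJP, hJM, map_neg, LinearEquiv.symm_apply_apply,
      LinearEquiv.apply_symm_apply]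
    abel
  · -- I ∘ I = -1
    intro X
    obtain ⟨p, m, rfl⟩ := decomp X
    simp only [map_add, hIP, hIM, map_neg, LinearEquiv.symm_apply_apply,
      LinearEquiv.apply_symm_apply, hIm_sq, neg_neg]
    simp only [map_neg, NegMemClass.coe_neg]
    abel
  · -- I J = - J I
    intro X
    obtain ⟨p, m, rfl⟩ := decomp X
    simp only [map_add, hJP, hJM, hIP, hIM, map_neg, LinearEquiv.symm_apply_apply,
      LinearEquiv.apply_symm_apply, neg_neg, NegMemClass.coe_neg]
    abel
  · -- h(JX, JY) = h(X,Y)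
    intro X Y
    obtain ⟨xp, xm, rfl⟩ := decomp X
    obtain ⟨yp, ym, rfl⟩ := decomp Y
    simp only [map_add, LinearMap.add_apply, hJP, hJM, map_neg, LinearMap.neg_apply,
      h_PP, h_MM, h_PM, h_MP, LinearEquiv.apply_symm_apply]
    ring
  · -- h(IX, IY) = h(X,Y)
    intro X Y
    obtain ⟨xp, xm, rfl⟩ := decomp X
    obtain ⟨yp, ym, rfl⟩ := decomp Y
    simp only [map_add, LinearMap.add_apply, hIP, hIM, map_neg, LinearMap.neg_apply,
      h_PP, h_MM, h_PM, h_MP, LinearEquiv.apply_symm_apply, hIm_orth, neg_neg]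
    ring
  · -- D X (J Y) = J (D X Y)
    intro X Y
    obtain ⟨xp, xm, rfl⟩ := decomp X
    obtain ⟨yp, ym, rfl⟩ := decomp Y
    simp only [map_add, LinearMap.add_apply, hJP, hJM, map_neg, hD_pp, hD_pm, hD_mp,
      hD_mm, LinearEquiv.apply_symm_apply, LinearEquiv.symm_apply_apply, map_zero,
      neg_zero, neg_neg]
    abel
  · -- D X (I Y) = I (D X Y)
    intro X Y
    obtain ⟨xp, xm, rfl⟩ := decomp X
    obtain ⟨yp, ym, rfl⟩ := decomp Y
    simp only [map_add, LinearMap.add_apply, hIP, hIM, map_neg, hD_pp, hD_pm, hD_mp,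
      hD_mm, LinearEquiv.apply_symm_apply, LinearEquiv.symm_apply_apply, map_zero,
      neg_zero, neg_neg, hIm_par]
    abel
end

section
/- Every two-dimensional real Lie algebra admits an integrable Born structure. -/
/-- Every two-dimensional real Lie algebra admits an integrable Born structure. -/
theorem two_dimensional_lie_algebra_is_born
    (L : Type*) [LieRing L] [LieAlgebra ℝ L] [FiniteDimensional ℝ L]
    (hdim : Module.finrank ℝ L = 2) :
    ∃ (g h ω : L →ₗ[ℝ] L →ₗ[ℝ] ℝ) (A B J : L →ₗ[ℝ] L),
      IsIntegrableBornStructure g h ω A B J := by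
  have b : Module.Basis (Fin 2) ℝ L := Module.finBasisOfFinrankEq ℝ L hdim
  set e1 := b 0 with he1
  set e2 := b 1 with he2
  set c1 := b.coord 0 with hc1
  set c2 := b.coord 1 with hc2
  have h11 : c1 e1 = 1 := by simp [hc1, he1]
  have h12 : c1 e2 = 0 := by simp [hc1, he2]
  have h21 : c2 e1 = 0 := by simp [hc2, he1]
  have h22 : c2 e2 = 1 := by simp [hc2, he2]
  have hspan : ∀ X : L, c1 X • e1 + c2 X • e2 = X := by
    intro X
    have := b.sum_repr X
    rw [Fin.sum_univ_two] at this
    simpa [hc1, hc2, Module.Basis.coord_apply, he1, he2] using this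
  have hbr : ∀ X Y : L, ⁅X, Y⁆ = (c1 X * c2 Y - c2 X * c1 Y) • ⁅e1, e2⁆ := by
    intro X Y
    have hskew : ⁅e2, e1⁆ = -⁅e1, e2⁆ := by rw [← lie_skew]
    conv_lhs => rw [← hspan X, ← hspan Y]
    simp only [add_lie, lie_add, smul_lie, lie_smul, lie_self, smul_zero, zero_add, add_zero,
      smul_smul, hskew]
    module
  -- bilinear forms
  refine ⟨LinearMap.mk₂ ℝ (fun X Y => c1 X * c1 Y - c2 X * c2 Y)
      (by intros; simp only [map_add]; ring) (by intros; simp only [map_smul, smul_eq_mul]; ring)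
      (by intros; simp only [map_add]; ring) (by intros; simp only [map_smul, smul_eq_mul]; ring),
    LinearMap.mk₂ ℝ (fun X Y => -(c1 X * c1 Y) - c2 X * c2 Y)
      (by intros; simp only [map_add]; ring) (by intros; simp only [map_smul, smul_eq_mul]; ring)
      (by intros; simp only [map_add]; ring) (by intros; simp only [map_smul, smul_eq_mul]; ring),
    LinearMap.mk₂ ℝ (fun X Y => c2 X * c1 Y - c1 X * c2 Y)
      (by intros; simp only [map_add]; ring) (by intros; simp only [map_smul, smul_eq_mul]; ring)
      (by intros; simp only [map_add]; ring) (by intros; simp only [map_smul, smul_eq_mul]; ring),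
    c2.smulRight e1 + c1.smulRight e2,
    (-c1).smulRight e1 + c2.smulRight e2,
    (-c2).smulRight e1 + c1.smulRight e2, ?_⟩
  simp only [IsIntegrableBornStructure, IsBornStructure, LinearMap.mk₂_apply,
    LinearMap.add_apply, LinearMap.smulRight_apply, LinearMap.neg_apply]
  -- coordinate evaluation of combinations
  have hcomb1 : ∀ a b : ℝ, c1 (a • e1 + b • e2) = a := by
    intro a b; simp [map_add, map_smul, h11, h12]
  have hcomb2 : ∀ a b : ℝ, c2 (a • e1 + b • e2) = b := by
    intro a b; simp [map_add, map_smul, h21, h22]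
  have hzero : ∀ X : L, c1 X = 0 → c2 X = 0 → X = 0 := by
    intro X hx1 hx2
    rw [← hspan X, hx1, hx2]; simp
  refine ⟨⟨?_, ?_, ?_, ?_, ?_, ?_, ?_, ?_, ?_, ?_, ?_, ?_⟩, ?_, ?_, ?_, ?_⟩
  · intro X Y; ring
  · intro X hX
    refine hzero X ?_ ?_
    · have := hX e1; rw [h11, h21] at this; linarith
    · have := hX e2; rw [h12, h22] at this; linarith
  · intro X Y; ring
  · intro X hX
    refine hzero X ?_ ?_
    · have := hX e1; rw [h11, h21] at this; linarith
    · have := hX e2; rw [h12, h22] at this; linarith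
  · intro X; ring
  · intro X hX
    refine hzero X ?_ ?_
    · have := hX e2; rw [h12, h22] at this; linarith
    · have := hX e1; rw [h11, h21] at this; linarith
  · intro X Y; simp only [hcomb1, hcomb2]; try ring
  · intro X Y; simp only [hcomb1, hcomb2]; try ring
  · intro X Y; simp only [hcomb1, hcomb2]; try ring
  · intro X; simp only [hcomb1, hcomb2, hspan]
  · intro X; simp only [hcomb1, hcomb2, neg_neg, hspan]
  · intro X
    simp only [hcomb1, hcomb2]
    conv_rhs => rw [← hspan X]
    module
  · -- closedness of ω
    intro X Y Z
    rw [hbr X Y, hbr Y Z, hbr Z X]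
    simp only [map_smul, LinearMap.smul_apply, LinearMap.mk₂_apply, smul_eq_mul]
    ring
  · -- Nijenhuis
    intro X Y
    rw [hbr (-c2 X • e1 + c1 X • e2) (-c2 Y • e1 + c1 Y • e2),
      hbr (-c2 X • e1 + c1 X • e2) Y, hbr X (-c2 Y • e1 + c1 Y • e2), hbr X Y]
    simp only [hcomb1, hcomb2, map_smul, smul_eq_mul, map_neg, map_sub,
      LinearMap.map_smul]
    module
  · intro X Y hX hY
    have hx : c2 X = c1 X := by
      have := congrArg c1 hX
      rw [hcomb1] at this
      rw [this]
    have hy : c2 Y = c1 Y := by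
      have := congrArg c1 hY
      rw [hcomb1] at this
      rw [this]
    have : ⁅X, Y⁆ = 0 := by
      rw [hbr X Y, hx, hy]; ring_nf; simp
    rw [this]; simp
  · intro X Y hX hY
    have hx : c2 X = -c1 X := by
      have := congrArg c1 hX
      rw [hcomb1, map_neg] at this
      rw [this]
    have hy : c2 Y = -c1 Y := by
      have := congrArg c1 hY
      rw [hcomb1, map_neg] at this
      rw [this]
    have : ⁅X, Y⁆ = 0 := by
      rw [hbr X Y, hx, hy]; ring_nf; simp
    rw [this]; simp
end
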